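/- arXiv:2006.13930 — 6 statements merged into one kernel-verified Lean document; each statement's English description precedes it below -/
import Mathlib

section
/- For all complex numbers z_1, ..., z_N and every integer H with 1 ≤ H ≤ N, we have |∑_{n=1}^N z_n|² ≤ ((N+H-1)/H²) · ( H·∑_{n=1}^N |z_n|² + 2·∑_{h=1}^{H-1} (H-h)·Re ∑_{n=1}^{N-h} z_{n+h}·conj(z_n) ). -/
open Finset

-- sum over ℤ-Icc equals sum over ℕ-Icc
private lemma sumIccIntNat (g : ℤ → ℂ) (b : ℕ) :
    ∑ n ∈ Finset.Icc (1:ℤ) (b:ℤ), g n = ∑ n ∈ Finset.Icc 1 b, g n := by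
  apply Finset.sum_nbij' (fun n : ℤ => n.toNat) (fun n : ℕ => (n : ℤ))
  · intro a ha
    simp only [Finset.mem_Icc] at ha ⊢
    omega
  · intro a ha
    simp only [Finset.mem_Icc] at ha ⊢
    omega
  · intro a ha
    simp only [Finset.mem_Icc] at ha
    omega
  · intro a ha; simp
  · intro a ha
    simp only [Finset.mem_Icc] at ha
    congr 1
    omega

private lemma sum_shift (f : ℤ → ℂ) (a b c : ℤ) :
    ∑ m ∈ Finset.Icc a b, f (m + c) = ∑ m ∈ Finset.Icc (a + c) (b + c), f m := by
  rw [← Finset.map_add_right_Icc a b c, Finset.sum_map]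
  simp [addRightEmbedding]

private lemma square_diff_sum (G : ℤ → ℂ) (H : ℕ) :
    ∑ h ∈ Finset.range H, ∑ h' ∈ Finset.range H, G ((h:ℤ) - (h':ℤ))
      = ∑ d ∈ Finset.range H, ((H:ℂ) - (d:ℂ)) * (G d + G (-(d:ℤ))) - (H:ℂ) * G 0 := by
  induction H with
  | zero => simp
  | succ H ih =>
    have hA : ∑ h ∈ Finset.range H, G ((h:ℤ) - (H:ℤ))
        = ∑ d ∈ Finset.range H, G (-((d:ℤ) + 1)) := by
      rw [← Finset.sum_range_reflect]
      apply Finset.sum_congr rfl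
      intro d hd
      simp only [Finset.mem_range] at hd
      congr 1
      omega
    have hB : ∑ h' ∈ Finset.range H, G ((H:ℤ) - (h':ℤ))
        = ∑ d ∈ Finset.range H, G ((d:ℤ) + 1) := by
      rw [← Finset.sum_range_reflect]
      apply Finset.sum_congr rfl
      intro d hd
      simp only [Finset.mem_range] at hd
      congr 1
      omega
    have e2 : ∑ d ∈ Finset.range H, G (d:ℤ) + G (H:ℤ)
        = ∑ d ∈ Finset.range H, G ((d:ℤ) + 1) + G 0 := by
      have t1 := Finset.sum_range_succ' (fun d : ℕ => G (d:ℤ)) H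
      have t2 := Finset.sum_range_succ (fun d : ℕ => G (d:ℤ)) H
      rw [← t2, t1]
      push_cast
      ring
    have e3 : ∑ d ∈ Finset.range H, G (-(d:ℤ)) + G (-(H:ℤ))
        = ∑ d ∈ Finset.range H, G (-((d:ℤ) + 1)) + G 0 := by
      have t1 := Finset.sum_range_succ' (fun d : ℕ => G (-(d:ℤ))) H
      have t2 := Finset.sum_range_succ (fun d : ℕ => G (-(d:ℤ))) H
      rw [← t2, t1]
      push_cast
      have harg : ∀ x : ℕ, G (-1 - (x:ℤ)) = G (-((x:ℤ) + 1)) := fun x => by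
        congr 1
        ring
      simp only [harg, neg_zero]
    have e4 : ∑ d ∈ Finset.range H, ((H:ℂ) + 1 - (d:ℂ)) * (G (d:ℤ) + G (-(d:ℤ)))
        = ∑ d ∈ Finset.range H, ((H:ℂ) - (d:ℂ)) * (G (d:ℤ) + G (-(d:ℤ)))
          + (∑ d ∈ Finset.range H, G (d:ℤ) + ∑ d ∈ Finset.range H, G (-(d:ℤ))) := by
      rw [← Finset.sum_add_distrib, ← Finset.sum_add_distrib]
      apply Finset.sum_congr rfl
      intros
      ring
    simp only [Finset.sum_range_succ, Finset.sum_add_distrib]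
    push_cast
    rw [ih, hA, hB]
    simp only [sub_self]
    linear_combination -e4 - e2 - e3

/-- Van der Corput inequality (Lemma `diff-ineq`): for complex numbers
`z_1, ..., z_N` and `1 ≤ H ≤ N`,
`|∑ z_n|² ≤ ((N+H-1)/H²)(H ∑ |z_n|² + 2 ∑_{h=1}^{H-1} (H-h) Re ∑_{n=1}^{N-h} z_{n+h} conj z_n)`. -/
theorem stmt0 (N H : ℕ) (hH : 1 ≤ H) (hHN : H ≤ N) (z : ℕ → ℂ) :
    ‖∑ n ∈ Finset.Icc 1 N, z n‖ ^ 2 ≤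
      (((N : ℝ) + H - 1) / H ^ 2) *
        (H * ∑ n ∈ Finset.Icc 1 N, ‖z n‖ ^ 2
          + 2 * ∑ h ∈ Finset.Icc 1 (H - 1),
              ((H : ℝ) - h) *
                (∑ n ∈ Finset.Icc 1 (N - h), z (n + h) * (starRingEnd ℂ) (z n)).re) := by
  classical
  set zz : ℤ → ℂ := fun m => if m ∈ Finset.Icc (1:ℤ) (N:ℤ) then z m.toNat else 0 with hzz
  have hsupp : ∀ m : ℤ, m ∉ Finset.Icc (1:ℤ) (N:ℤ) → zz m = 0 := by
    intro m hm
    simp only [hzz]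
    rw [if_neg hm]
  set T : Finset ℤ := Finset.Icc (2 - (H:ℤ)) (N:ℤ) with hT
  set w : ℤ → ℂ := fun m => ∑ h ∈ Finset.range H, zz (m + h) with hw
  set G : ℤ → ℂ := fun d => ∑ n ∈ Finset.Icc (1:ℤ) (N:ℤ),
      zz (n + d) * (starRingEnd ℂ) (zz n) with hG
  set S : ℂ := ∑ n ∈ Finset.Icc (1:ℤ) (N:ℤ), zz n with hS
  have hzval : ∀ n : ℕ, 1 ≤ n → n ≤ N → zz (n:ℤ) = z n := by
    intro n h1 h2
    have hmem : ((n:ℤ)) ∈ Finset.Icc (1:ℤ) (N:ℤ) := by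
      simp only [Finset.mem_Icc]; omega
    simp only [hzz]
    rw [if_pos hmem, Int.toNat_natCast]
  -- the ℕ-sum equals S
  have hSz : ∑ n ∈ Finset.Icc 1 N, z n = S := by
    rw [hS, sumIccIntNat]
    apply Finset.sum_congr rfl
    intro n hn
    simp only [Finset.mem_Icc] at hn
    rw [hzval n hn.1 hn.2]
  -- step 1 : H * S = ∑ m ∈ T, w m
  have step1 : (H:ℂ) * S = ∑ m ∈ T, w m := by
    rw [hw]
    rw [Finset.sum_comm]
    have e : ∀ h ∈ Finset.range H, ∑ m ∈ T, zz (m + (h:ℤ)) = S := by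
      intro h hh
      simp only [Finset.mem_range] at hh
      rw [hT, sum_shift, hS]
      symm
      apply Finset.sum_subset
      · apply Finset.Icc_subset_Icc <;> omega
      · intro x _ hx
        exact hsupp x hx
    rw [Finset.sum_congr rfl e, Finset.sum_const, Finset.card_range, nsmul_eq_mul]
  -- step 4 : ∑ m ∈ T, w m * conj (w m) = double sum of G
  have L1 : ∀ h ∈ Finset.range H, ∀ h' ∈ Finset.range H,
      ∑ m ∈ T, zz (m + (h:ℤ)) * (starRingEnd ℂ) (zz (m + (h':ℤ))) = G ((h:ℤ) - (h':ℤ)) := by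
    intro h hh h' hh'
    simp only [Finset.mem_range] at hh hh'
    calc ∑ m ∈ T, zz (m + (h:ℤ)) * (starRingEnd ℂ) (zz (m + (h':ℤ)))
        = ∑ m ∈ Finset.Icc (2-(H:ℤ)) (N:ℤ),
            zz (m + (h':ℤ) + ((h:ℤ) - (h':ℤ))) * (starRingEnd ℂ) (zz (m + (h':ℤ))) := by
          rw [hT]
          apply Finset.sum_congr rfl
          intro m _
          rw [show m + (h':ℤ) + ((h:ℤ) - (h':ℤ)) = m + (h:ℤ) by ring]
      _ = ∑ m ∈ Finset.Icc (2-(H:ℤ) + (h':ℤ)) ((N:ℤ) + (h':ℤ)),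
            zz (m + ((h:ℤ) - (h':ℤ))) * (starRingEnd ℂ) (zz m) :=
          sum_shift (fun n => zz (n + ((h:ℤ) - (h':ℤ))) * (starRingEnd ℂ) (zz n))
            (2-(H:ℤ)) (N:ℤ) (h':ℤ)
      _ = ∑ m ∈ Finset.Icc (1:ℤ) (N:ℤ),
            zz (m + ((h:ℤ) - (h':ℤ))) * (starRingEnd ℂ) (zz m) := by
          symm
          apply Finset.sum_subset
          · apply Finset.Icc_subset_Icc <;> omega
          · intro x _ hx
            rw [hsupp x hx]
            simp
      _ = G ((h:ℤ) - (h':ℤ)) := by rw [hG]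
  have step4 : ∑ m ∈ T, w m * (starRingEnd ℂ) (w m)
      = ∑ h ∈ Finset.range H, ∑ h' ∈ Finset.range H, G ((h:ℤ) - (h':ℤ)) := by
    have e1 : ∀ m : ℤ, w m * (starRingEnd ℂ) (w m)
        = ∑ h ∈ Finset.range H, ∑ h' ∈ Finset.range H,
            zz (m + (h:ℤ)) * (starRingEnd ℂ) (zz (m + (h':ℤ))) := by
      intro m
      rw [hw]
      simp only [map_sum]
      rw [Finset.sum_mul_sum]
    rw [Finset.sum_congr rfl (fun m _ => e1 m), Finset.sum_comm]
    apply Finset.sum_congr rfl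
    intro h hh
    rw [Finset.sum_comm]
    exact Finset.sum_congr rfl fun h' hh' => L1 h hh h' hh'
  -- G(-d) = conj (G d)
  have hGconj : ∀ d : ℕ, G (-(d:ℤ)) = (starRingEnd ℂ) (G (d:ℤ)) := by
    intro d
    have lhs1 : G (-(d:ℤ)) = ∑ m ∈ Finset.Icc ((1:ℤ) + -(d:ℤ)) ((N:ℤ) + -(d:ℤ)),
        zz m * (starRingEnd ℂ) (zz (m + d)) := by
      rw [hG, ← sum_shift]
      apply Finset.sum_congr rfl
      intro n _
      rw [show n + -(d:ℤ) + (d:ℤ) = n by ring]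
    have lhs2 : G (-(d:ℤ)) = ∑ m ∈ Finset.Icc (1:ℤ) ((N:ℤ) - d),
        zz m * (starRingEnd ℂ) (zz (m + d)) := by
      rw [lhs1]

      symm
      apply Finset.sum_subset
      · apply Finset.Icc_subset_Icc <;> omega
      · intro x hx hx'
        simp only [Finset.mem_Icc] at hx hx'
        have hz0 : zz x = 0 := by
          apply hsupp; simp only [Finset.mem_Icc]; omega
        rw [hz0, zero_mul]
    have rhs1 : (starRingEnd ℂ) (G (d:ℤ)) = ∑ m ∈ Finset.Icc (1:ℤ) ((N:ℤ) - d),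
        zz m * (starRingEnd ℂ) (zz (m + d)) := by
      rw [hG, map_sum]
      have e : ∑ n ∈ Finset.Icc (1:ℤ) (N:ℤ),
            (starRingEnd ℂ) (zz (n + d) * (starRingEnd ℂ) (zz n))
          = ∑ n ∈ Finset.Icc (1:ℤ) (N:ℤ), zz n * (starRingEnd ℂ) (zz (n + d)) := by
        apply Finset.sum_congr rfl
        intro n _
        rw [map_mul, Complex.conj_conj]
        ring
      rw [e]
      symm
      apply Finset.sum_subset
      · apply Finset.Icc_subset_Icc <;> omega
      · intro x hx hx'
        simp only [Finset.mem_Icc] at hx hx'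
        have hz0 : zz (x + d) = 0 := by
          apply hsupp; simp only [Finset.mem_Icc]; omega
        rw [hz0, map_zero, mul_zero]
    rw [lhs2, rhs1]
  -- G at a natural shift, in terms of z
  have hGnat : ∀ h : ℕ, h ≤ N → G (h:ℤ)
      = ∑ n ∈ Finset.Icc 1 (N - h), z (n + h) * (starRingEnd ℂ) (z n) := by
    intro h hhN
    have r1 : G (h:ℤ) = ∑ n ∈ Finset.Icc (1:ℤ) ((N:ℤ) - h),
        zz (n + h) * (starRingEnd ℂ) (zz n) := by
      rw [hG]
      symm
      apply Finset.sum_subset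
      · apply Finset.Icc_subset_Icc <;> omega
      · intro x hx hx'
        simp only [Finset.mem_Icc] at hx hx'
        have hz0 : zz (x + h) = 0 := by
          apply hsupp; simp only [Finset.mem_Icc]; omega
        rw [hz0, zero_mul]
    have r2 : ((N - h : ℕ) : ℤ) = (N:ℤ) - h := by omega
    rw [r1, ← r2, sumIccIntNat (fun n => zz (n + h) * (starRingEnd ℂ) (zz n))]
    apply Finset.sum_congr rfl
    intro n hn
    simp only [Finset.mem_Icc] at hn
    have c1 : ((n:ℤ) + h) = ((n + h : ℕ) : ℤ) := by push_cast; ring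
    rw [c1, hzval (n + h) (by omega) (by omega), hzval n (by omega) (by omega)]
  -- G 0 real part
  have hG0 : (G 0).re = ∑ n ∈ Finset.Icc 1 N, ‖z n‖ ^ 2 := by
    have e0 : G 0 = ∑ n ∈ Finset.Icc 1 N, z n * (starRingEnd ℂ) (z n) := by
      have hg0 : G 0 = ∑ n ∈ Finset.Icc (1:ℤ) (N:ℤ), zz (n + 0) * (starRingEnd ℂ) (zz n) := by
        rw [hG]
      have e1 : ∑ n ∈ Finset.Icc (1:ℤ) (N:ℤ), zz (n + 0) * (starRingEnd ℂ) (zz n)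
          = ∑ n ∈ Finset.Icc (1:ℤ) (N:ℤ), zz n * (starRingEnd ℂ) (zz n) := by
        apply Finset.sum_congr rfl; intro n _; rw [add_zero]
      rw [hg0, e1, sumIccIntNat (fun n => zz n * (starRingEnd ℂ) (zz n))]
      apply Finset.sum_congr rfl
      intro n hn
      simp only [Finset.mem_Icc] at hn
      rw [hzval n (by omega) (by omega)]
    rw [e0, Complex.re_sum]
    apply Finset.sum_congr rfl
    intro n _
    rw [Complex.mul_conj, Complex.ofReal_re, Complex.sq_norm]
  -- cardinality of T
  have hcard : ((T.card : ℝ)) = (N:ℝ) + H - 1 := by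
    have hc : T.card = N + H - 1 := by
      rw [hT, Int.card_Icc]
      omega
    rw [hc, Nat.cast_sub (by omega), Nat.cast_add, Nat.cast_one]
  -- Cauchy-Schwarz
  have CS : ‖∑ m ∈ T, w m‖ ^ 2
      ≤ (T.card : ℝ) * ∑ m ∈ T, ‖w m‖ ^ 2 := by
    calc ‖∑ m ∈ T, w m‖ ^ 2
        ≤ (∑ m ∈ T, ‖w m‖) ^ 2 := by
          apply pow_le_pow_left₀ (norm_nonneg _)
          exact norm_sum_le _ _
      _ ≤ (T.card : ℝ) * ∑ m ∈ T, ‖w m‖ ^ 2 := sq_sum_le_card_mul_sum_sq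
  -- sum of |w|^2 as real part
  have hre : ∑ m ∈ T, ‖w m‖ ^ 2 = (∑ m ∈ T, w m * (starRingEnd ℂ) (w m)).re := by
    rw [Complex.re_sum]
    apply Finset.sum_congr rfl
    intro m _
    rw [Complex.mul_conj, Complex.ofReal_re, Complex.sq_norm]
  -- main identity
  obtain ⟨K, rfl⟩ : ∃ K, H = K + 1 := ⟨H - 1, by omega⟩
  have main_eq : ∑ m ∈ T, ‖w m‖ ^ 2
      = (K + 1 : ℕ) * ∑ n ∈ Finset.Icc 1 N, ‖z n‖ ^ 2
        + 2 * ∑ h ∈ Finset.Icc 1 (K + 1 - 1),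
            (((K + 1 : ℕ) : ℝ) - h) *
              (∑ n ∈ Finset.Icc 1 (N - h), z (n + h) * (starRingEnd ℂ) (z n)).re := by
    rw [hre, step4, square_diff_sum]
    have e1 : ∀ d : ℕ, G (d:ℤ) + G (-(d:ℤ)) = ((2 * (G (d:ℤ)).re : ℝ) : ℂ) := by
      intro d
      rw [hGconj d]
      exact Complex.add_conj _
    have e2 : ∀ (a : ℕ) (x : ℝ),
        ((((K+1:ℕ):ℂ) - (a:ℂ)) * (x:ℂ)).re = (((K+1:ℕ):ℝ) - a) * x := by
      intro a x
      have ec : (((K+1:ℕ):ℂ) - (a:ℂ)) = ((((K+1:ℕ):ℝ) - a : ℝ) : ℂ) := by push_cast; ring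
      rw [ec, ← Complex.ofReal_mul, Complex.ofReal_re]
    rw [Complex.sub_re, Complex.re_sum]
    have e3 : ∀ d ∈ Finset.range (K+1),
        ((((K+1:ℕ):ℂ) - (d:ℂ)) * (G (d:ℤ) + G (-(d:ℤ)))).re
          = (((K+1:ℕ):ℝ) - d) * (2 * (G (d:ℤ)).re) := by
      intro d _
      rw [e1 d, e2 d]
    rw [Finset.sum_congr rfl e3]
    have e4 : (((K+1:ℕ):ℂ) * G 0).re = ((K+1:ℕ):ℝ) * (G 0).re := by
      have ec : (((K+1:ℕ):ℂ)) = ((((K+1:ℕ):ℝ)) : ℂ) := by push_cast; ring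
      rw [ec, Complex.re_ofReal_mul]
    rw [e4]
    -- peel off d = 0
    rw [Finset.sum_range_succ']
    have e5 : 2 * ∑ h ∈ Finset.Icc 1 (K + 1 - 1),
          (((K + 1 : ℕ) : ℝ) - h) *
            (∑ n ∈ Finset.Icc 1 (N - h), z (n + h) * (starRingEnd ℂ) (z n)).re
        = ∑ i ∈ Finset.range K,
            (((K + 1 : ℕ) : ℝ) - ((i+1 : ℕ) : ℝ)) * (2 * (G (((i+1:ℕ)) : ℤ)).re) := by
      rw [Finset.mul_sum]
      rw [show K + 1 - 1 = K from rfl]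
      rw [show Finset.Icc 1 K = Finset.Ico 1 (K+1) by rw [Finset.Ico_add_one_right_eq_Icc]]
      rw [Finset.sum_Ico_eq_sum_range]
      simp only [Nat.add_sub_cancel]
      apply Finset.sum_congr rfl
      intro i hi
      simp only [Finset.mem_range] at hi
      rw [show 1 + i = i + 1 by omega]
      rw [hGnat (i + 1) (by omega)]
      push_cast
      ring
    rw [e5]
    simp only [Nat.cast_zero]
    rw [hG0]
    ring
  -- assemble
  rw [hSz]
  have habs : ‖(((K+1:ℕ)):ℂ) * S‖ = ((K+1:ℕ):ℝ) * ‖S‖ := by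
    rw [norm_mul, Complex.norm_natCast]
  have key : (((K+1:ℕ)):ℝ) ^ 2 * ‖S‖ ^ 2
      ≤ ((N:ℝ) + (K+1:ℕ) - 1) * (∑ m ∈ T, ‖w m‖ ^ 2) := by
    have h1 : (((K+1:ℕ)):ℝ) ^ 2 * ‖S‖ ^ 2
        = ‖∑ m ∈ T, w m‖ ^ 2 := by
      rw [← step1, habs]
      ring
    rw [h1, ← hcard]
    exact CS
  rw [main_eq] at key
  rw [div_mul_eq_mul_div, le_div_iff₀ (by positivity)]
  calc ‖S‖ ^ 2 * ((K+1:ℕ):ℝ) ^ 2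
      = (((K+1:ℕ)):ℝ) ^ 2 * ‖S‖ ^ 2 := by ring
    _ ≤ _ := key
end

section
/- Let k ≥ d+2 ≥ 3 be integers and let C_{k,d+1} be the set of (y_0,...,y_d) ∈ ℝ^{d+1} with 0 ≤ y_0 < 1 and 0 ≤ ∑_{i=0}^{d} C(j,i)·y_i < 1 for all integers j with 1 ≤ j ≤ k-1, where C(j,i) denotes the binomial coefficient. Then the Lebesgue measure of C_{k,d+1} is at least 1/∏_{i=1}^{d} C(k-1,i). -/
open Finset MeasureTheory

lemma keyF (a : ℕ) : ∀ (n e : ℕ), a ≤ n → e ≤ n →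
    ∑ t ∈ Finset.range (e+1), ((-1:ℤ)^t * (a.choose t) * ((n-t).choose (e-t)))
      = ((n-a).choose e : ℤ) := by
  induction a with
  | zero =>
    intro n e _ _
    rw [Finset.sum_eq_single 0]
    · simp
    · intro t _ ht
      simp [Nat.choose_eq_zero_of_lt (Nat.pos_of_ne_zero ht)]
    · simp
  | succ a ih =>
    intro n e ha he
    match e with
    | 0 => simp
    | e+1 =>
      obtain ⟨n, rfl⟩ : ∃ n', n = n' + 1 := ⟨n - 1, by omega⟩
      rw [Finset.sum_range_succ']
      have expand : ∀ u ∈ Finset.range (e+1),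
          ((-1:ℤ)^(u+1) * ((a+1).choose (u+1)) * ((n+1-(u+1)).choose (e+1-(u+1))))
          = -((-1:ℤ)^u * (a.choose u) * (((n-u)).choose (e-u)))
            + ((-1:ℤ)^(u+1) * (a.choose (u+1)) * ((n+1-(u+1)).choose (e+1-(u+1)))) := by
        intro u _
        have h1 : n + 1 - (u+1) = n - u := by omega
        have h2 : e + 1 - (u+1) = e - u := by omega
        rw [Nat.choose_succ_succ, h1, h2]
        push_cast
        ring
      rw [Finset.sum_congr rfl expand, Finset.sum_add_distrib]
      have hA : ∑ u ∈ Finset.range (e+1), -((-1:ℤ)^u * (a.choose u) * ((n-u).choose (e-u)))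
          = -(((n-a).choose e : ℤ)) := by
        rw [Finset.sum_neg_distrib, ih n e (by omega) (by omega)]
      have hB : (∑ u ∈ Finset.range (e+1),
            ((-1:ℤ)^(u+1) * (a.choose (u+1)) * ((n+1-(u+1)).choose (e+1-(u+1)))))
            + ((-1:ℤ)^0 * ((a+1).choose 0) * ((n+1-0).choose (e+1-0)))
          = ((n+1-a).choose (e+1) : ℤ) := by
        have h0 : ((-1:ℤ)^0 * (((a+1).choose 0 : ℕ) : ℤ) * (((n+1-0).choose (e+1-0) : ℕ) : ℤ))
            = ((-1:ℤ)^0 * ((a.choose 0 : ℕ) : ℤ) * (((n+1-0).choose (e+1-0) : ℕ) : ℤ)) := by simp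
        have h5 := ih (n+1) (e+1) (by omega) (by omega)
        rw [Finset.sum_range_succ'] at h5
        rw [h0]
        exact h5
      rw [hA, add_assoc, hB]
      have h3 : n + 1 - a = (n - a) + 1 := by omega
      have h4 : n + 1 - (a+1) = n - a := by omega
      rw [h3, h4, Nat.choose_succ_succ]
      push_cast
      ring

lemma keyI (K d m j : ℕ) (hm : m ≤ d) (hdK : d ≤ K) (hj : j ≤ K) :
    ∑ i ∈ Finset.range (d+1),
        ((j.choose i : ℤ) * ((-1:ℤ)^(i-m) * (i.choose m) * ((K-i).choose (d-i))))
      = (j.choose m : ℤ) * ((K-j).choose (d-m)) := by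
  rw [Finset.range_eq_Ico, ← Finset.sum_Ico_consecutive _ (Nat.zero_le m) (by omega : m ≤ d+1)]
  have h1 : ∑ i ∈ Finset.Ico 0 m,
      ((j.choose i : ℤ) * ((-1:ℤ)^(i-m) * (i.choose m) * ((K-i).choose (d-i)))) = 0 := by
    apply Finset.sum_eq_zero
    intro i hi
    have : i < m := (Finset.mem_Ico.mp hi).2
    simp [Nat.choose_eq_zero_of_lt this]
  rw [h1, zero_add, Finset.sum_Ico_eq_sum_range]
  have h2 : d + 1 - m = (d-m)+1 := by omega
  rw [h2]
  rcases lt_or_ge j m with hjm | hjm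
  · rw [Finset.sum_eq_zero, eq_comm]
    · simp [Nat.choose_eq_zero_of_lt hjm]
    · intro t _
      simp [Nat.choose_eq_zero_of_lt (by omega : j < m + t)]
  · have h3 : ∀ t ∈ Finset.range ((d-m)+1),
        ((j.choose (m+t) : ℤ) * ((-1:ℤ)^(m+t-m) * ((m+t).choose m) * ((K-(m+t)).choose (d-(m+t)))))
        = (j.choose m : ℤ) * ((-1:ℤ)^t * ((j-m).choose t) * ((((K-m)-t)).choose ((d-m)-t))) := by
      intro t _
      have e1 : m + t - m = t := by omega
      have e2 : K - (m+t) = (K-m) - t := by omega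
      have e3 : d - (m+t) = (d-m) - t := by omega
      rw [e1, e2, e3]
      rcases le_or_gt (m+t) j with h | h
      · have hc := Nat.choose_mul (n := j) (k := m+t) (s := m) (by omega)
        rw [e1] at hc
        have hc' : (j.choose (m+t) : ℤ) * ((m+t).choose m : ℤ)
            = (j.choose m : ℤ) * ((j-m).choose t : ℤ) := by exact_mod_cast hc
        linear_combination ((-1:ℤ)^t * ((((K-m)-t)).choose ((d-m)-t) : ℤ)) * hc'
      · have c1 : j.choose (m+t) = 0 := Nat.choose_eq_zero_of_lt h
        have c2 : (j-m).choose t = 0 := Nat.choose_eq_zero_of_lt (by omega)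
        simp [c1, c2]
    rw [Finset.sum_congr rfl h3, ← Finset.mul_sum,
      keyF (j-m) (K-m) (d-m) (by omega) (by omega)]
    have h4 : K - m - (j - m) = K - j := by omega
    rw [h4]

lemma keyV (K d j : ℕ) (hj : j ≤ K) :
    ∑ m ∈ Finset.range (d+1), (j.choose m) * ((K-j).choose (d-m)) = K.choose d := by
  have h := Nat.add_choose_eq j (K-j) d
  rw [Finset.Nat.sum_antidiagonal_eq_sum_range_succ_mk] at h
  have h2 : j + (K - j) = K := by omega
  rw [h2] at h
  exact h.symm

/-- The Lebesgue measure of the convex set `C_{k,d+1}` is at least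
`1/∏_{i=1}^d C(k-1,i)`. -/
theorem stmt1 (d k : ℕ) (hd : 1 ≤ d) (hk : d + 2 ≤ k) :
    (1 : ENNReal) / ∏ i ∈ Finset.Icc 1 d, ((k - 1).choose i : ENNReal) ≤
      MeasureTheory.volume {y : Fin (d + 1) → ℝ |
        0 ≤ y 0 ∧ y 0 < 1 ∧ ∀ j ∈ Finset.Icc 1 (k - 1),
          0 ≤ ∑ i : Fin (d + 1), (j.choose (i : ℕ) : ℝ) * y i ∧
          ∑ i : Fin (d + 1), (j.choose (i : ℕ) : ℝ) * y i < 1} := by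
  set K := k - 1 with hKdef
  have hdK : d + 1 ≤ K := by omega
  have hCd : 0 < K.choose d := Nat.choose_pos (by omega)
  have hCdR : (0:ℝ) < (K.choose d : ℝ) := by exact_mod_cast hCd
  set A : Matrix (Fin (d+1)) (Fin (d+1)) ℝ := fun i m =>
    (((-1:ℤ)^((i:ℕ)-(m:ℕ)) * ((i:ℕ).choose (m:ℕ)) * ((K-(i:ℕ)).choose (d-(i:ℕ))) : ℤ) : ℝ)
      / (K.choose d : ℝ) with hA
  -- inner sum identity
  have inner : ∀ (j : ℕ), j ≤ K → ∀ m : Fin (d+1),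
      ∑ i : Fin (d+1), (j.choose (i:ℕ) : ℝ) * A i m
        = ((j.choose (m:ℕ) * (K-j).choose (d-(m:ℕ)) : ℕ) : ℝ) / (K.choose d : ℝ) := by
    intro j hj m
    have hint := keyI K d (m:ℕ) j m.is_le (by omega) hj
    have step1 : ∑ i : Fin (d+1), (j.choose (i:ℕ) : ℝ) * A i m
        = ((∑ i ∈ Finset.range (d+1),
            ((j.choose i : ℤ) * ((-1:ℤ)^(i-(m:ℕ)) * (i.choose (m:ℕ)) * ((K-i).choose (d-i))))
            : ℤ) : ℝ) / (K.choose d : ℝ) := by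
      rw [Int.cast_sum, Finset.sum_div, ← Fin.sum_univ_eq_sum_range]
      apply Finset.sum_congr rfl
      intro i _
      rw [hA]
      push_cast
      ring
    rw [step1, hint]
    push_cast
    ring
  -- the key sum computation
  have key : ∀ (t : Fin (d+1) → ℝ) (j : ℕ), j ≤ K →
      ∑ i : Fin (d+1), (j.choose (i:ℕ) : ℝ) * (A.mulVec t) i
        = ∑ m : Fin (d+1), t m *
            (((j.choose (m:ℕ) * (K-j).choose (d-(m:ℕ)) : ℕ) : ℝ) / (K.choose d : ℝ)) := by
    intro t j hj
    simp only [Matrix.mulVec, dotProduct]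
    calc ∑ i : Fin (d+1), (j.choose (i:ℕ) : ℝ) * (∑ m : Fin (d+1), A i m * t m)
        = ∑ i : Fin (d+1), ∑ m : Fin (d+1), (j.choose (i:ℕ) : ℝ) * A i m * t m := by
          apply Finset.sum_congr rfl; intro i _; rw [Finset.mul_sum]; apply Finset.sum_congr rfl
          intro m _; ring
      _ = ∑ m : Fin (d+1), ∑ i : Fin (d+1), (j.choose (i:ℕ) : ℝ) * A i m * t m :=
          Finset.sum_comm
      _ = ∑ m : Fin (d+1), t m *
            (((j.choose (m:ℕ) * (K-j).choose (d-(m:ℕ)) : ℕ) : ℝ) / (K.choose d : ℝ)) := by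
          apply Finset.sum_congr rfl; intro m _
          rw [← inner j hj m, ← Finset.sum_mul, mul_comm]
  -- sum of q's equals 1
  have qsum : ∀ (j : ℕ), j ≤ K →
      ∑ m : Fin (d+1), (((j.choose (m:ℕ) * (K-j).choose (d-(m:ℕ)) : ℕ) : ℝ) / (K.choose d : ℝ))
        = 1 := by
    intro j hj
    rw [← Finset.sum_div]
    rw [show ∑ m : Fin (d+1), ((j.choose (m:ℕ) * (K-j).choose (d-(m:ℕ)) : ℕ) : ℝ)
        = ((∑ m ∈ Finset.range (d+1), j.choose m * (K-j).choose (d-m) : ℕ) : ℝ) by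
      rw [Nat.cast_sum, ← Fin.sum_univ_eq_sum_range]]
    rw [keyV K d j hj, div_self (ne_of_gt hCdR)]
  -- image subset
  have hsub : (Matrix.toLin' A) '' (Set.pi Set.univ fun _ : Fin (d+1) => Set.Ico (0:ℝ) 1)
      ⊆ {y : Fin (d + 1) → ℝ |
        0 ≤ y 0 ∧ y 0 < 1 ∧ ∀ j ∈ Finset.Icc 1 K,
          0 ≤ ∑ i : Fin (d + 1), (j.choose (i : ℕ) : ℝ) * y i ∧
          ∑ i : Fin (d + 1), (j.choose (i : ℕ) : ℝ) * y i < 1} := by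
    rintro y ⟨t, ht, rfl⟩
    rw [Set.mem_pi] at ht
    have ht' : ∀ m : Fin (d+1), 0 ≤ t m ∧ t m < 1 := by
      intro m; exact ht m (Set.mem_univ m)
    rw [Matrix.toLin'_apply]
    -- bounds for all j ≤ K
    have bounds : ∀ (j : ℕ), j ≤ K →
        0 ≤ ∑ i : Fin (d + 1), (j.choose (i : ℕ) : ℝ) * (A.mulVec t) i ∧
        ∑ i : Fin (d + 1), (j.choose (i : ℕ) : ℝ) * (A.mulVec t) i < 1 := by
      intro j hj
      rw [key t j hj]
      constructor
      · apply Finset.sum_nonneg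
        intro m _
        exact mul_nonneg (ht' m).1 (by positivity)
      · have h1 : ∑ m : Fin (d+1), t m *
            (((j.choose (m:ℕ) * (K-j).choose (d-(m:ℕ)) : ℕ) : ℝ) / (K.choose d : ℝ))
            < ∑ m : Fin (d+1),
            (((j.choose (m:ℕ) * (K-j).choose (d-(m:ℕ)) : ℕ) : ℝ) / (K.choose d : ℝ)) := by
          apply Finset.sum_lt_sum
          · intro m _
            have hq : (0:ℝ) ≤ ((j.choose (m:ℕ) * (K-j).choose (d-(m:ℕ)) : ℕ) : ℝ) / (K.choose d : ℝ) := by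
              positivity
            nlinarith [(ht' m).1, (ht' m).2]
          · -- exists m with q m > 0
            have : ∃ m : Fin (d+1), (0:ℝ) <
                ((j.choose (m:ℕ) * (K-j).choose (d-(m:ℕ)) : ℕ) : ℝ) / (K.choose d : ℝ) := by
              by_contra hcon
              push_neg at hcon
              have : ∑ m : Fin (d+1),
                  (((j.choose (m:ℕ) * (K-j).choose (d-(m:ℕ)) : ℕ) : ℝ) / (K.choose d : ℝ)) = 0 := by
                apply le_antisymm
                · exact Finset.sum_nonpos (fun m _ => hcon m)
                · apply Finset.sum_nonneg; intro m _; positivity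
              rw [qsum j hj] at this
              norm_num at this
            obtain ⟨m, hm⟩ := this
            exact ⟨m, Finset.mem_univ m, by nlinarith [(ht' m).2, (ht' m).1]⟩
        calc _ < _ := h1
          _ = 1 := qsum j hj
    -- y 0 equals the j = 0 sum
    have y0eq : ∑ i : Fin (d + 1), ((0:ℕ).choose (i : ℕ) : ℝ) * (A.mulVec t) i
        = (A.mulVec t) 0 := by
      rw [Fintype.sum_eq_single (0 : Fin (d+1))]
      · simp
      · intro i hi
        have : (0:ℕ) < (i:ℕ) := by
          rcases Nat.eq_zero_or_pos (i:ℕ) with h | h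
          · exact absurd (Fin.ext h : i = 0) hi
          · exact h
        simp [Nat.choose_eq_zero_of_lt this]
    have b0 := bounds 0 (by omega)
    rw [y0eq] at b0
    exact ⟨b0.1, b0.2, fun j hj => bounds j (Finset.mem_Icc.mp hj).2⟩
  -- measure computation
  have hcube : volume (Set.pi Set.univ fun _ : Fin (d+1) => Set.Ico (0:ℝ) 1) = 1 := by
    rw [volume_pi_pi]
    simp [Real.volume_Ico]
  have hlow : A.BlockTriangular OrderDual.toDual := by
    intro i m h
    have him : (i:ℕ) < (m:ℕ) := h
    rw [hA]
    simp [Nat.choose_eq_zero_of_lt him]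
  have hdetA : A.det = ∏ i : Fin (d+1), (((K-(i:ℕ)).choose (d-(i:ℕ)) : ℕ) : ℝ) / (K.choose d : ℝ) := by
    rw [Matrix.det_of_lowerTriangular A hlow]
    apply Finset.prod_congr rfl
    intro i _
    rw [hA]
    simp
  have hdetnn : 0 ≤ A.det := by
    rw [hdetA]
    positivity
  have himg : volume ((Matrix.toLin' A) '' (Set.pi Set.univ fun _ : Fin (d+1) => Set.Ico (0:ℝ) 1))
      = ENNReal.ofReal A.det := by
    rw [Measure.addHaar_image_linearMap, LinearMap.det_toLin', hcube, mul_one, abs_of_nonneg hdetnn]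
  have PNpos : 0 < ∏ i ∈ Finset.Icc 1 d, K.choose i :=
    Finset.prod_pos (fun i hi => Nat.choose_pos (by have := (Finset.mem_Icc.mp hi).2; omega))
  have natineq : (K.choose d)^(d+1)
      ≤ (∏ m ∈ Finset.range (d+1), (K-m).choose (d-m)) * ∏ i ∈ Finset.Icc 1 d, K.choose i := by
    have hstep : ∀ m ∈ Finset.range (d+1), K.choose d ≤ K.choose m * ((K-m).choose (d-m)) := by
      intro m hm
      have hm' : m ≤ d := by have := Finset.mem_range.mp hm; omega
      have hcm := Nat.choose_mul (n:=K) (k:=d) (s:=m) hm'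
      calc K.choose d ≤ K.choose d * d.choose m :=
            Nat.le_mul_of_pos_right _ (Nat.choose_pos hm')
        _ = K.choose m * ((K-m).choose (d-m)) := hcm
    calc (K.choose d)^(d+1) = ∏ m ∈ Finset.range (d+1), K.choose d := by
          rw [Finset.prod_const, Finset.card_range]
      _ ≤ ∏ m ∈ Finset.range (d+1), (K.choose m * ((K-m).choose (d-m))) :=
          Finset.prod_le_prod' hstep
      _ = (∏ m ∈ Finset.range (d+1), K.choose m) * ∏ m ∈ Finset.range (d+1), (K-m).choose (d-m) :=
          Finset.prod_mul_distrib
      _ = (∏ m ∈ Finset.range (d+1), (K-m).choose (d-m)) * ∏ i ∈ Finset.Icc 1 d, K.choose i := by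
          rw [mul_comm]
          congr 1
          rw [Finset.range_eq_Ico,
            ← Finset.prod_Ico_consecutive _ (Nat.zero_le 1) (by omega : 1 ≤ d+1),
            show Finset.Ico 1 (d+1) = Finset.Icc 1 d from Finset.Ico_add_one_right_eq_Icc 1 d]
          simp
  have realineq : 1 ≤ A.det * ((∏ i ∈ Finset.Icc 1 d, K.choose i : ℕ) : ℝ) := by
    rw [hdetA, Finset.prod_div_distrib, Finset.prod_const, Finset.card_univ, Fintype.card_fin]
    rw [div_mul_eq_mul_div, le_div_iff₀ (by positivity), one_mul]
    have h9 : ((K.choose d : ℝ))^(d+1) ≤ (∏ i : Fin (d+1), (((K-(i:ℕ)).choose (d-(i:ℕ)) : ℕ) : ℝ))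
        * ((∏ i ∈ Finset.Icc 1 d, K.choose i : ℕ) : ℝ) := by
      rw [Fin.prod_univ_eq_prod_range (fun i => (((K-i).choose (d-i) : ℕ):ℝ)) (d+1)]
      exact_mod_cast natineq
    exact h9
  calc (1 : ENNReal) / ∏ i ∈ Finset.Icc 1 d, (K.choose i : ENNReal)
      ≤ ENNReal.ofReal A.det := by
        rw [show ∏ i ∈ Finset.Icc 1 d, (K.choose i : ENNReal)
            = ((∏ i ∈ Finset.Icc 1 d, K.choose i : ℕ) : ENNReal) by push_cast; rfl]
        rw [ENNReal.div_le_iff (by exact_mod_cast PNpos.ne') (ENNReal.natCast_ne_top _)]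
        rw [← ENNReal.ofReal_natCast, ← ENNReal.ofReal_mul hdetnn]
        exact ENNReal.one_le_ofReal.mpr realineq
    _ = volume ((Matrix.toLin' A) '' (Set.pi Set.univ fun _ : Fin (d+1) => Set.Ico (0:ℝ) 1)) :=
        himg.symm
    _ ≤ _ := measure_mono hsub
end

section
/- Let k ≥ d+2 ≥ 3 be integers. Define C'_{k,d+1} = { (y_0,...,y_d) ∈ ℝ^{d+1} : 0 ≤ y_0 < 1 and 0 ≤ ∑_{i=0}^{j} C(k-1,i)·y_i < 1 for all 1 ≤ j ≤ d }. Then C'_{k,d+1} is contained in C_{k,d+1} = { (y_0,...,y_d) : 0 ≤ y_0 < 1 and 0 ≤ ∑_{i=0}^{d} C(j,i)·y_i < 1 for all 1 ≤ j ≤ k-1 }. -/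
open Finset

lemma choose_ratio_nat (j k l : ℕ) (hj : j ≤ k) :
    j.choose (l + 1) * k.choose l ≤ j.choose l * k.choose (l + 1) := by
  have h1 : j.choose (l+1) * (l+1) = j.choose l * (j - l) := Nat.choose_succ_right_eq j l
  have h2 : k.choose (l+1) * (l+1) = k.choose l * (k - l) := Nat.choose_succ_right_eq k l
  have key : j.choose (l+1) * k.choose l * (l+1) ≤ j.choose l * k.choose (l+1) * (l+1) := by
    calc j.choose (l+1) * k.choose l * (l+1) = j.choose (l+1) * (l+1) * k.choose l := by ring
    _ = j.choose l * (j - l) * k.choose l := by rw [h1]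
    _ ≤ j.choose l * (k - l) * k.choose l :=
        Nat.mul_le_mul_right _ (Nat.mul_le_mul_left _ (Nat.sub_le_sub_right hj l))
    _ = j.choose l * (k.choose l * (k - l)) := by ring
    _ = j.choose l * (k.choose (l+1) * (l+1)) := by rw [h2]
    _ = j.choose l * k.choose (l+1) * (l+1) := by ring
  exact Nat.le_of_mul_le_mul_right key (Nat.succ_pos l)

/-- The set `C'_{k,d+1}` is contained in `C_{k,d+1}`. -/
theorem stmt2 (d k : ℕ) (hd : 1 ≤ d) (hk : d + 2 ≤ k) :
    {y : Fin (d + 1) → ℝ |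
        0 ≤ y 0 ∧ y 0 < 1 ∧ ∀ j ∈ Finset.Icc 1 d,
          0 ≤ ∑ i : Fin (d + 1), (if (i : ℕ) ≤ j then ((k - 1).choose (i : ℕ) : ℝ) else 0) * y i ∧
          ∑ i : Fin (d + 1), (if (i : ℕ) ≤ j then ((k - 1).choose (i : ℕ) : ℝ) else 0) * y i < 1}
      ⊆
    {y : Fin (d + 1) → ℝ |
        0 ≤ y 0 ∧ y 0 < 1 ∧ ∀ j ∈ Finset.Icc 1 (k - 1),
          0 ≤ ∑ i : Fin (d + 1), (j.choose (i : ℕ) : ℝ) * y i ∧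
          ∑ i : Fin (d + 1), (j.choose (i : ℕ) : ℝ) * y i < 1} := by
  intro y hy
  obtain ⟨h0, h1, hS⟩ := hy
  refine ⟨h0, h1, ?_⟩
  set m := k - 1 with hm
  have hdm : d + 1 ≤ m := by omega
  set Y : ℕ → ℝ := fun i => if h : i < d + 1 then y ⟨i, h⟩ else 0 with hY
  have hYy : ∀ i : Fin (d + 1), Y (i : ℕ) = y i := by
    intro i
    simp [hY, i.isLt]
    intro h; exact absurd i.isLt (by omega)
  set a : ℕ → ℝ := fun i => (m.choose i : ℝ) * Y i with ha
  set S : ℕ → ℝ := fun n => ∑ i ∈ range (n + 1), a i with hSdef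
  -- the hypothesis sums equal S j
  have conv : ∀ j ≤ d,
      (∑ i : Fin (d + 1), (if (i : ℕ) ≤ j then (m.choose (i : ℕ) : ℝ) else 0) * y i) = S j := by
    intro j hj
    have e1 : (∑ i : Fin (d + 1), (if (i : ℕ) ≤ j then (m.choose (i : ℕ) : ℝ) else 0) * y i)
        = ∑ i ∈ range (d + 1), (if i ≤ j then (m.choose i : ℝ) else 0) * Y i := by
      rw [← Fin.sum_univ_eq_sum_range (fun n => (if n ≤ j then (m.choose n : ℝ) else 0) * Y n)]
      exact Finset.sum_congr rfl fun i _ => by rw [hYy]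
    rw [e1, hSdef]
    rw [← Finset.sum_subset (Finset.range_subset_range.2 (by omega) : range (j + 1) ⊆ range (d + 1))
        (fun x _ hx => by
          have : ¬ x ≤ j := by simpa [Finset.mem_range] using hx
          simp [this])]
    exact Finset.sum_congr rfl fun x hx => by
      have : x ≤ j := by simpa [Finset.mem_range, Nat.lt_succ_iff] using hx
      simp [this, ha]
  have hSbound : ∀ l ≤ d, 0 ≤ S l ∧ S l < 1 := by
    intro l hl
    rcases Nat.eq_zero_or_pos l with h | h
    · subst h
      have e : S 0 = y 0 := by
        have : Y 0 = y 0 := hYy 0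
        simp [hSdef, ha, this]
      rw [e]; exact ⟨h0, h1⟩
    · have hmem : l ∈ Finset.Icc 1 d := Finset.mem_Icc.2 ⟨h, hl⟩
      have := hS l hmem
      rwa [conv l hl] at this
  intro j hj
  obtain ⟨hj1, hjm⟩ := Finset.mem_Icc.1 hj
  -- rewrite goal sum over range
  have egoal : (∑ i : Fin (d + 1), (j.choose (i : ℕ) : ℝ) * y i)
      = ∑ i ∈ range (d + 1), (j.choose i : ℝ) * Y i := by
    rw [← Fin.sum_univ_eq_sum_range (fun n => (j.choose n : ℝ) * Y n)]
    exact Finset.sum_congr rfl fun i _ => by rw [hYy]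
  rw [egoal]
  set f : ℕ → ℝ := fun l => (j.choose l : ℝ) / (m.choose l : ℝ) with hf
  have hchoosepos : ∀ l ≤ d, (0 : ℝ) < (m.choose l : ℝ) := by
    intro l hl
    exact_mod_cast Nat.choose_pos (by omega : l ≤ m)
  have hmono : ∀ l, l < d → f (l + 1) ≤ f l := by
    intro l hl
    have hden1 := hchoosepos l (by omega)
    have hden2 := hchoosepos (l + 1) (by omega)
    rw [hf]
    rw [div_le_div_iff₀ hden2 hden1]
    exact_mod_cast choose_ratio_nat j m l hjm
  have hf0 : f 0 = 1 := by simp [hf]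
  have hfnonneg : ∀ l, 0 ≤ f l := fun l => div_nonneg (by positivity) (by positivity)
  set c : ℕ → ℝ := fun l => if l = d then f d else f l - f (l + 1) with hc
  have hcnonneg : ∀ l ∈ range (d + 1), 0 ≤ c l := by
    intro l hl
    rw [hc]
    rcases eq_or_ne l d with h | h
    · simp [h, hfnonneg]
    · have hld : l < d := by
        have := Finset.mem_range.1 hl; omega
      simp only [h, if_false]
      linarith [hmono l hld]
  have hcsum : ∑ l ∈ range (d + 1), c l = 1 := by
    rw [Finset.sum_range_succ]
    have e1 : ∑ l ∈ range d, c l = ∑ l ∈ range d, (f l - f (l + 1)) :=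
      Finset.sum_congr rfl fun l hl => by
        have : l ≠ d := by have := Finset.mem_range.1 hl; omega
        simp [hc, this]
    rw [e1, Finset.sum_range_sub' f d]
    simp [hc, hf0]
  -- Abel summation
  have habel := Finset.sum_range_by_parts f a (d + 1)
  simp only [smul_eq_mul, Nat.add_sub_cancel] at habel
  have eT : ∑ i ∈ range (d + 1), (j.choose i : ℝ) * Y i = ∑ l ∈ range (d + 1), c l * S l := by
    have e1 : ∑ i ∈ range (d + 1), (j.choose i : ℝ) * Y i
        = ∑ i ∈ range (d + 1), f i * a i := by
      refine Finset.sum_congr rfl fun i hi => ?_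
      have hi' : i ≤ d := by have := Finset.mem_range.1 hi; omega
      have hne : (m.choose i : ℝ) ≠ 0 := ne_of_gt (hchoosepos i hi')
      rw [hf, ha]
      field_simp
    have e2 : ∑ l ∈ range d, c l * S l = ∑ l ∈ range d, -((f (l + 1) - f l) * S l) :=
      Finset.sum_congr rfl fun l hl => by
        have : l ≠ d := by have := Finset.mem_range.1 hl; omega
        simp [hc, this]; ring
    have hcd : c d = f d := by simp [hc]
    rw [e1, habel, Finset.sum_range_succ (fun l => c l * S l) d, e2,
      Finset.sum_neg_distrib, hcd]
    simp only [hSdef]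
    ring
  rw [eT]
  constructor
  · exact Finset.sum_nonneg fun l hl =>
      mul_nonneg (hcnonneg l hl) (hSbound l (by have := Finset.mem_range.1 hl; omega)).1
  · -- exists positive coefficient
    have hex : ∃ l ∈ range (d + 1), 0 < c l := by
      by_contra hcon
      push_neg at hcon
      have : ∑ l ∈ range (d + 1), c l ≤ 0 :=
        Finset.sum_nonpos fun l hl => hcon l hl
      linarith [hcsum]
    obtain ⟨l0, hl0mem, hl0pos⟩ := hex
    calc ∑ l ∈ range (d + 1), c l * S l < ∑ l ∈ range (d + 1), c l * 1 := by
          refine Finset.sum_lt_sum (fun l hl => ?_) ⟨l0, hl0mem, ?_⟩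
          · exact mul_le_mul_of_nonneg_left
              (le_of_lt (hSbound l (by have := Finset.mem_range.1 hl; omega)).2)
              (hcnonneg l hl)
          · exact mul_lt_mul_of_pos_left
              (hSbound l0 (by have := Finset.mem_range.1 hl0mem; omega)).2 hl0pos
      _ = 1 := by simp [hcsum]
end

section
/- Let (N_m) and (R_m) be sequences of positive integers diverging to infinity, d ≥ 0 an integer, and for each n let p_n(x) = c_n x^d + q_n(x) where q_n is a real polynomial of degree less than d. If the sequence (c_n) is uniformly distributed modulo 1, then (1/(N_m R_m)) ∑_{n=1}^{N_m} ∑_{r=1}^{R_m} e(p_n(r)) → 0 as m → ∞, where e(x) = exp(2πix). -/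
open Filter

/-- `e x = exp(2πix)`. -/
noncomputable def e (x : ℝ) : ℂ := Complex.exp (2 * Real.pi * Complex.I * x)

open Polynomial Finset




lemma e_norm (x : ℝ) : ‖e x‖ = 1 := by
  simp [e, Complex.norm_exp]

lemma e_mul_conj (x y : ℝ) : e x * (starRingEnd ℂ) (e y) = e (x - y) := by
  rw [e, e, e, ← Complex.exp_conj, ← Complex.exp_add]
  congr 1
  have : (starRingEnd ℂ) (2 * Real.pi * Complex.I * y) = -(2 * Real.pi * Complex.I * y) := by
    simp only [map_mul, Complex.conj_I, Complex.conj_ofReal, map_ofNat]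
    ring
  rw [this]
  push_cast
  ring

lemma coeff_comp_sub (p : Polynomial ℝ) (a b : ℝ) (k : ℕ) (hk : p.natDegree ≤ k) :
    (p.comp (X + C a) - p.comp (X + C b)).coeff k = 0 := by
  have hc : Polynomial.hasseDeriv k p = C (p.coeff k) := by
    ext j
    rw [Polynomial.hasseDeriv_coeff, Polynomial.coeff_C]
    cases j with
    | zero => simp
    | succ j =>
      have : p.coeff (j + 1 + k) = 0 :=
        Polynomial.coeff_eq_zero_of_natDegree_lt (by omega)
      simp [this]
  have ha : (p.comp (X + C a)).coeff k = (Polynomial.hasseDeriv k p).eval a := by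
    rw [← Polynomial.taylor_apply, Polynomial.taylor_coeff]
  have hb : (p.comp (X + C b)).coeff k = (Polynomial.hasseDeriv k p).eval b := by
    rw [← Polynomial.taylor_apply, Polynomial.taylor_coeff]
  rw [Polynomial.coeff_sub, ha, hb, hc]
  simp


lemma degD (d : ℕ) (cc a b : ℝ) (q : Polynomial ℝ)
    (hq : q.degree < ((d + 1 : ℕ) : WithBot ℕ)) :
    ((C cc * X ^ (d + 1) + q).comp (X + C a) - (C cc * X ^ (d + 1) + q).comp (X + C b)
      - C (((d : ℝ) + 1) * (a - b) * cc) * X ^ d).degree < (d : WithBot ℕ) := by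
  have hqd : q.natDegree ≤ d := by
    by_cases h0 : q = 0
    · simp [h0]
    · have := (Polynomial.natDegree_lt_iff_degree_lt h0).2 hq
      omega
  rw [Polynomial.degree_lt_iff_coeff_zero]
  intro m hm
  have hqm : (q.comp (X + C a) - q.comp (X + C b)).coeff m = 0 :=
    coeff_comp_sub q a b m (le_trans hqd hm)
  have hkey : ((C cc * X ^ (d + 1) + q).comp (X + C a)
      - (C cc * X ^ (d + 1) + q).comp (X + C b)).coeff m
      = cc * (((X + C a) ^ (d + 1)).coeff m - ((X + C b) ^ (d + 1)).coeff m) := by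
    simp only [Polynomial.add_comp, Polynomial.mul_comp, Polynomial.C_comp,
      Polynomial.pow_comp, Polynomial.X_comp, Polynomial.coeff_sub,
      Polynomial.coeff_add, Polynomial.coeff_C_mul]
    have := hqm
    rw [Polynomial.coeff_sub] at this
    ring_nf
    ring_nf at this
    linarith [this]
  rw [Polynomial.coeff_sub, hkey, Polynomial.coeff_C_mul, Polynomial.coeff_X_pow,
    Polynomial.coeff_X_add_C_pow, Polynomial.coeff_X_add_C_pow]
  rcases eq_or_lt_of_le hm with h | h
  · subst h
    simp [Nat.choose_succ_self_right]
    ring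
  · have h1 : ¬ (m = d) := by omega
    rcases eq_or_lt_of_le (Nat.succ_le_of_lt h) with h2 | h2
    · rw [← h2]
      simp
    · have : (d + 1).choose m = 0 := Nat.choose_eq_zero_of_lt h2
      simp [this, h1]


-- Step A: shift bound
lemma shift_bound (R h : ℕ) (f : ℕ → ℂ) (hf : ∀ r, ‖f r‖ = 1) :
    ‖∑ r ∈ Ioc 0 R, f (r + h) - ∑ r ∈ Ioc 0 R, f r‖ ≤ 2 * h := by
  have e1 : ∑ r ∈ Ioc 0 R, f (r + h) = ∑ r ∈ Ioc h (R + h), f r := by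
    rw [show Ioc h (R + h) = Ioc (0 + h) (R + h) by rw [Nat.zero_add],
      ← Finset.map_add_right_Ioc, Finset.sum_map]
    rfl
  have e2 : (∑ r ∈ Ioc 0 h, f r) + ∑ r ∈ Ioc h (R + h), f r = ∑ r ∈ Ioc 0 (R + h), f r :=
    Finset.sum_Ioc_consecutive _ (Nat.zero_le h) (Nat.le_add_left h R)
  have e3 : (∑ r ∈ Ioc 0 R, f r) + ∑ r ∈ Ioc R (R + h), f r = ∑ r ∈ Ioc 0 (R + h), f r :=
    Finset.sum_Ioc_consecutive _ (Nat.zero_le R) (Nat.le_add_right R h)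
  have e4 : ∑ r ∈ Ioc 0 R, f (r + h) - ∑ r ∈ Ioc 0 R, f r
      = (∑ r ∈ Ioc R (R + h), f r) - ∑ r ∈ Ioc 0 h, f r := by
    rw [e1]; linear_combination e2 - e3
  rw [e4]
  have b1 : ∀ (u v : ℕ), ‖∑ r ∈ Ioc u (u + v), f r‖ ≤ v := by
    intro u v
    calc ‖∑ r ∈ Ioc u (u + v), f r‖ ≤ ∑ r ∈ Ioc u (u + v), ‖f r‖ := norm_sum_le _ _
    _ = ∑ r ∈ Ioc u (u + v), 1 := by simp [hf]
    _ = v := by simp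
  calc ‖(∑ r ∈ Ioc R (R + h), f r) - ∑ r ∈ Ioc 0 h, f r‖
      ≤ ‖∑ r ∈ Ioc R (R + h), f r‖ + ‖∑ r ∈ Ioc 0 h, f r‖ := norm_sub_le _ _
    _ ≤ h + h := by
        have := b1 R h
        have := b1 0 h
        simp only [Nat.zero_add] at *
        gcongr <;> assumption
    _ = 2 * h := by ring


lemma vdc_master (N R H : ℕ) (hH : 1 ≤ H) (hN : 1 ≤ N) (hR : 1 ≤ R)
    (a : ℕ → ℕ → ℂ) (ha : ∀ n r, ‖a n r‖ = 1) :
    ‖((N : ℂ) * (R : ℂ))⁻¹ * ∑ n ∈ Ioc 0 N, ∑ r ∈ Ioc 0 R, a n r‖ ^ 2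
      ≤ 2 / H + (2 / (H : ℝ) ^ 2) * (∑ h ∈ range H, ∑ h' ∈ range H,
          if h = h' then 0 else
            ‖((N : ℂ) * (R : ℂ))⁻¹ * ∑ n ∈ Ioc 0 N, ∑ r ∈ Ioc 0 R,
              a n (r + h) * (starRingEnd ℂ) (a n (r + h'))‖)
        + 8 * (H : ℝ) ^ 2 / (R : ℝ) ^ 2 := by
  set T : ℕ → ℂ := fun n => ∑ r ∈ Ioc 0 R, a n r with hT
  set b : ℕ → ℕ → ℂ := fun n r => ∑ h ∈ range H, a n (r + h) with hb
  set V : ℕ → ℂ := fun n => ∑ r ∈ Ioc 0 R, b n r with hV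
  set U : ℕ → ℕ → ℂ := fun h h' => ∑ n ∈ Ioc 0 N, ∑ r ∈ Ioc 0 R,
      a n (r + h) * (starRingEnd ℂ) (a n (r + h')) with hU
  have Hr0 : (0:ℝ) < H := by exact_mod_cast hH
  have Nr0 : (0:ℝ) < N := by exact_mod_cast hN
  have Rr0 : (0:ℝ) < R := by exact_mod_cast hR
  -- Step B
  have stepB : ∀ n, ‖(H : ℂ) * T n - V n‖ ≤ 2 * (H:ℝ) ^ 2 := by
    intro n
    have hVsw : V n = ∑ h ∈ range H, ∑ r ∈ Ioc 0 R, a n (r + h) := Finset.sum_comm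
    have hHT : (H : ℂ) * T n = ∑ _h ∈ range H, T n := by
      rw [Finset.sum_const, card_range, nsmul_eq_mul]
    rw [hHT, hVsw, ← Finset.sum_sub_distrib]
    calc ‖∑ h ∈ range H, (T n - ∑ r ∈ Ioc 0 R, a n (r + h))‖
        ≤ ∑ h ∈ range H, ‖T n - ∑ r ∈ Ioc 0 R, a n (r + h)‖ := norm_sum_le _ _
      _ ≤ ∑ h ∈ range H, 2 * (H:ℝ) := by
          apply Finset.sum_le_sum
          intro h hh
          rw [norm_sub_rev]
          calc ‖(∑ r ∈ Ioc 0 R, a n (r + h)) - T n‖ ≤ 2 * h := shift_bound R h (a n) (ha n)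
            _ ≤ 2 * H := by
                have : (h:ℝ) ≤ H := by exact_mod_cast (Finset.mem_range.mp hh).le
                linarith
      _ = 2 * (H:ℝ) ^ 2 := by rw [Finset.sum_const, card_range, nsmul_eq_mul]; ring
  -- Step C
  have stepC : ∀ n, ‖T n‖ ^ 2 ≤ 2 * ‖V n‖ ^ 2 / (H:ℝ) ^ 2 + 8 * (H:ℝ) ^ 2 := by
    intro n
    have h1 : (H:ℝ) * ‖T n‖ ≤ ‖V n‖ + 2 * (H:ℝ) ^ 2 := by
      have := stepB n
      have h2 : ‖(H : ℂ) * T n‖ ≤ ‖V n‖ + ‖(H : ℂ) * T n - V n‖ := by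
        calc ‖(H : ℂ) * T n‖ = ‖V n + ((H : ℂ) * T n - V n)‖ := by ring_nf
          _ ≤ ‖V n‖ + ‖(H : ℂ) * T n - V n‖ := norm_add_le _ _
      rw [norm_mul, Complex.norm_natCast] at h2
      linarith
    have h2 : ((H:ℝ) * ‖T n‖) ^ 2 ≤ (‖V n‖ + 2 * (H:ℝ) ^ 2) ^ 2 := by
      have := mul_self_le_mul_self (by positivity : (0:ℝ) ≤ (H:ℝ) * ‖T n‖) h1
      nlinarith [this]
    rw [div_add' _ _ _ (by positivity), le_div_iff₀ (by positivity)]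
    nlinarith [sq_nonneg (‖V n‖ - 2 * (H:ℝ) ^ 2)]
  -- Step D
  have stepD : ∀ n, ‖V n‖ ^ 2 ≤ (R:ℝ) * ∑ r ∈ Ioc 0 R, ‖b n r‖ ^ 2 := by
    intro n
    calc ‖V n‖ ^ 2 ≤ (∑ r ∈ Ioc 0 R, ‖b n r‖) ^ 2 := by
          apply pow_le_pow_left₀ (norm_nonneg _) (norm_sum_le _ _)
      _ ≤ (∑ _r ∈ Ioc 0 R, (1:ℝ) ^ 2) * ∑ r ∈ Ioc 0 R, ‖b n r‖ ^ 2 := by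
          simpa using Finset.sum_mul_sq_le_sq_mul_sq (Ioc 0 R) (fun _ => (1:ℝ))
            (fun r => ‖b n r‖)
      _ = (R:ℝ) * ∑ r ∈ Ioc 0 R, ‖b n r‖ ^ 2 := by simp
  -- Step E
  have stepE : ∑ n ∈ Ioc 0 N, ∑ r ∈ Ioc 0 R, ‖b n r‖ ^ 2
      = (∑ h ∈ range H, ∑ h' ∈ range H, U h h').re := by
    set F : ℕ → ℕ → ℕ → ℕ → ℝ := fun n r h h' =>
      (a n (r + h) * (starRingEnd ℂ) (a n (r + h'))).re with hF
    have hpt : ∀ n r, ‖b n r‖ ^ 2 = ∑ h ∈ range H, ∑ h' ∈ range H, F n r h h' := by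
      intro n r
      have h1 : (‖b n r‖ : ℝ) ^ 2 = (b n r * (starRingEnd ℂ) (b n r)).re := by
        simp [Complex.mul_conj, Complex.normSq_eq_norm_sq,
          ← Complex.ofReal_pow]
      rw [h1]
      simp only [hb, map_sum, Finset.sum_mul_sum]
      rw [Complex.re_sum]
      exact Finset.sum_congr rfl fun h _ => Complex.re_sum _ _
    have hrhs : (∑ h ∈ range H, ∑ h' ∈ range H, U h h').re
        = ∑ h ∈ range H, ∑ h' ∈ range H, ∑ n ∈ Ioc 0 N, ∑ r ∈ Ioc 0 R, F n r h h' := by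
      rw [Complex.re_sum]
      refine Finset.sum_congr rfl fun h _ => ?_
      rw [Complex.re_sum]
      refine Finset.sum_congr rfl fun h' _ => ?_
      simp only [hU]
      rw [Complex.re_sum]
      exact Finset.sum_congr rfl fun n _ => Complex.re_sum _ _
    rw [hrhs]
    calc ∑ n ∈ Ioc 0 N, ∑ r ∈ Ioc 0 R, ‖b n r‖ ^ 2
        = ∑ n ∈ Ioc 0 N, ∑ r ∈ Ioc 0 R, ∑ h ∈ range H, ∑ h' ∈ range H, F n r h h' :=
          Finset.sum_congr rfl fun n _ => Finset.sum_congr rfl fun r _ => hpt n r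
      _ = ∑ n ∈ Ioc 0 N, ∑ h ∈ range H, ∑ r ∈ Ioc 0 R, ∑ h' ∈ range H, F n r h h' :=
          Finset.sum_congr rfl fun n _ => Finset.sum_comm
      _ = ∑ h ∈ range H, ∑ n ∈ Ioc 0 N, ∑ r ∈ Ioc 0 R, ∑ h' ∈ range H, F n r h h' :=
          Finset.sum_comm
      _ = ∑ h ∈ range H, ∑ n ∈ Ioc 0 N, ∑ h' ∈ range H, ∑ r ∈ Ioc 0 R, F n r h h' :=
          Finset.sum_congr rfl fun h _ => Finset.sum_congr rfl fun n _ => Finset.sum_comm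
      _ = ∑ h ∈ range H, ∑ h' ∈ range H, ∑ n ∈ Ioc 0 N, ∑ r ∈ Ioc 0 R, F n r h h' :=
          Finset.sum_congr rfl fun h _ => Finset.sum_comm
  -- Step F
  have stepF : (∑ h ∈ range H, ∑ h' ∈ range H, U h h').re
      ≤ (H:ℝ) * ((N:ℝ) * (R:ℝ)) + ∑ h ∈ range H, ∑ h' ∈ range H,
          (if h = h' then 0 else ‖U h h'‖) := by
    rw [Complex.re_sum]
    have hpt : ∀ h, (∑ h' ∈ range H, U h h').re
        ≤ ∑ h' ∈ range H, ((if h = h' then ((N:ℝ) * (R:ℝ)) else 0)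
            + (if h = h' then 0 else ‖U h h'‖)) := by
      intro h
      rw [Complex.re_sum]
      apply Finset.sum_le_sum
      intro h' _
      by_cases hh : h = h'
      · subst hh
        simp only [if_pos rfl]
        have : U h h = ((N:ℝ) * (R:ℝ) : ℝ) := by
          simp only [hU]
          have : ∀ n r, a n (r + h) * (starRingEnd ℂ) (a n (r + h)) = 1 := by
            intro n r
            rw [Complex.mul_conj]
            norm_cast
            have := ha n (r + h)
            rw [Complex.normSq_eq_norm_sq, this]
            norm_num
          simp [this, Nat.card_Ioc]
        rw [this]
        simp
      · simp only [if_neg hh]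
        have : (U h h').re ≤ ‖U h h'‖ := Complex.re_le_norm _
        linarith
    calc (∑ h ∈ range H, (∑ h' ∈ range H, U h h').re)
        ≤ ∑ h ∈ range H, ∑ h' ∈ range H, ((if h = h' then ((N:ℝ) * (R:ℝ)) else 0)
            + (if h = h' then 0 else ‖U h h'‖)) := Finset.sum_le_sum fun h _ => hpt h
      _ = (H:ℝ) * ((N:ℝ) * (R:ℝ)) + ∑ h ∈ range H, ∑ h' ∈ range H,
            (if h = h' then 0 else ‖U h h'‖) := by
          simp only [Finset.sum_add_distrib]
          congr 1
          simp only [Finset.sum_ite_eq, Finset.mem_range]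
          rw [Finset.sum_congr rfl (fun h hh => if_pos (Finset.mem_range.mp hh))]
          rw [Finset.sum_const, card_range, nsmul_eq_mul]

  -- Step H (Cauchy-Schwarz over n)
  have stepH : ‖∑ n ∈ Ioc 0 N, T n‖ ^ 2 ≤ (N:ℝ) * ∑ n ∈ Ioc 0 N, ‖T n‖ ^ 2 := by
    calc ‖∑ n ∈ Ioc 0 N, T n‖ ^ 2 ≤ (∑ n ∈ Ioc 0 N, ‖T n‖) ^ 2 := by
          apply pow_le_pow_left₀ (norm_nonneg _) (norm_sum_le _ _)
      _ ≤ (∑ _n ∈ Ioc 0 N, (1:ℝ) ^ 2) * ∑ n ∈ Ioc 0 N, ‖T n‖ ^ 2 := by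
          simpa using Finset.sum_mul_sq_le_sq_mul_sq (Ioc 0 N) (fun _ => (1:ℝ))
            (fun n => ‖T n‖)
      _ = (N:ℝ) * ∑ n ∈ Ioc 0 N, ‖T n‖ ^ 2 := by simp
  set Goff := ∑ h ∈ range H, ∑ h' ∈ range H, (if h = h' then (0:ℝ) else ‖U h h'‖) with hGoff
  have hGnn : 0 ≤ Goff := by
    apply Finset.sum_nonneg; intro h _
    apply Finset.sum_nonneg; intro h' _
    split <;> positivity
  have chain1 : ∑ n ∈ Ioc 0 N, ‖T n‖ ^ 2
      ≤ (2 / (H:ℝ) ^ 2) * ((R:ℝ) * ((H:ℝ) * ((N:ℝ) * (R:ℝ)) + Goff))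
        + 8 * (H:ℝ) ^ 2 * (N:ℝ) := by
    calc ∑ n ∈ Ioc 0 N, ‖T n‖ ^ 2
        ≤ ∑ n ∈ Ioc 0 N, (2 * ‖V n‖ ^ 2 / (H:ℝ) ^ 2 + 8 * (H:ℝ) ^ 2) :=
          Finset.sum_le_sum fun n _ => stepC n
      _ = (2 / (H:ℝ) ^ 2) * ∑ n ∈ Ioc 0 N, ‖V n‖ ^ 2 + 8 * (H:ℝ) ^ 2 * (N:ℝ) := by
          rw [Finset.sum_add_distrib, Finset.sum_const, Nat.card_Ioc, Finset.mul_sum]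
          congr 1
          · exact Finset.sum_congr rfl fun n _ => by ring
          · rw [nsmul_eq_mul, Nat.sub_zero]; ring
      _ ≤ (2 / (H:ℝ) ^ 2) * ∑ n ∈ Ioc 0 N, ((R:ℝ) * ∑ r ∈ Ioc 0 R, ‖b n r‖ ^ 2)
            + 8 * (H:ℝ) ^ 2 * (N:ℝ) := by
          gcongr with n hn
          exact stepD n
      _ = (2 / (H:ℝ) ^ 2) * ((R:ℝ) * (∑ h ∈ range H, ∑ h' ∈ range H, U h h').re)
            + 8 * (H:ℝ) ^ 2 * (N:ℝ) := by
          rw [← Finset.mul_sum, stepE]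
      _ ≤ (2 / (H:ℝ) ^ 2) * ((R:ℝ) * ((H:ℝ) * ((N:ℝ) * (R:ℝ)) + Goff))
            + 8 * (H:ℝ) ^ 2 * (N:ℝ) := by
          gcongr
  have hnorm : ‖((N:ℂ) * (R:ℂ))⁻¹‖ = ((N:ℝ) * (R:ℝ))⁻¹ := by
    rw [norm_inv, norm_mul, Complex.norm_natCast, Complex.norm_natCast]
  have hmid : ∑ h ∈ range H, ∑ h' ∈ range H,
      (if h = h' then (0:ℝ) else
        ‖((N : ℂ) * (R : ℂ))⁻¹ * ∑ n ∈ Ioc 0 N, ∑ r ∈ Ioc 0 R,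
          a n (r + h) * (starRingEnd ℂ) (a n (r + h'))‖)
      = ((N:ℝ) * (R:ℝ))⁻¹ * Goff := by
    rw [hGoff, Finset.mul_sum]
    refine Finset.sum_congr rfl fun h _ => ?_
    rw [Finset.mul_sum]
    refine Finset.sum_congr rfl fun h' _ => ?_
    split
    · simp
    · rw [norm_mul, hnorm]
  rw [hmid, norm_mul, hnorm, mul_pow]
  calc (((N:ℝ) * (R:ℝ))⁻¹) ^ 2 * ‖∑ n ∈ Ioc 0 N, T n‖ ^ 2
      ≤ (((N:ℝ) * (R:ℝ))⁻¹) ^ 2 * ((N:ℝ) * ((2 / (H:ℝ) ^ 2)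
          * ((R:ℝ) * ((H:ℝ) * ((N:ℝ) * (R:ℝ)) + Goff)) + 8 * (H:ℝ) ^ 2 * (N:ℝ))) := by
        exact mul_le_mul_of_nonneg_left (stepH.trans (by gcongr)) (by positivity)

    _ = 2 / (H:ℝ) + 2 / (H:ℝ) ^ 2 * (((N:ℝ) * (R:ℝ))⁻¹ * Goff) + 8 * (H:ℝ) ^ 2 / (R:ℝ) ^ 2 := by
        field_simp




lemma hIcc (M : ℕ) : Finset.Icc 1 M = Finset.Ioc 0 M := by
  ext x; simp; omega

lemma key (d : ℕ) : ∀ (c : ℕ → ℝ) (q : ℕ → Polynomial ℝ),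
    (∀ n, (q n).degree < (d : WithBot ℕ)) →
    (∀ h : ℤ, h ≠ 0 →
      Tendsto (fun M : ℕ => (M : ℂ)⁻¹ * ∑ n ∈ Finset.Icc 1 M, e (h * c n))
        atTop (nhds 0)) →
    Tendsto (fun p : ℕ × ℕ =>
        ((p.1 : ℂ) * (p.2 : ℂ))⁻¹ *
          ∑ n ∈ Finset.Icc 1 p.1, ∑ r ∈ Finset.Icc 1 p.2,
            e (c n * (r : ℝ) ^ d + (q n).eval (r : ℝ)))
      (atTop ×ˢ atTop) (nhds 0) := by
  induction d with
  | zero =>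
    intro c q hq hud
    have hq0 : ∀ n, q n = 0 := by
      intro n
      have h1 := hq n
      rw [Nat.cast_zero] at h1
      exact Polynomial.degree_eq_bot.mp (Nat.WithBot.lt_zero_iff.mp h1)
    have hpt : ∀ n (r : ℕ), c n * (r : ℝ) ^ 0 + (q n).eval (r : ℝ) = ((1:ℤ) : ℝ) * c n := by
      intro n r; rw [hq0 n]; simp
    have hg := (hud 1 one_ne_zero).comp (tendsto_fst (f := atTop (α := ℕ)) (g := atTop (α := ℕ)))
    apply Tendsto.congr' _ hg
    filter_upwards [tendsto_snd.eventually (eventually_ge_atTop 1)] with p hp2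
    have h2 : ((p.2 : ℂ)) ≠ 0 := Nat.cast_ne_zero.mpr (by omega)
    calc ((p.1 : ℂ))⁻¹ * ∑ n ∈ Finset.Icc 1 p.1, e (((1:ℤ):ℝ) * c n)
        = ((p.1 : ℂ) * (p.2 : ℂ))⁻¹ *
            ∑ n ∈ Finset.Icc 1 p.1, ∑ r ∈ Finset.Icc 1 p.2, e (c n * (r:ℝ) ^ 0 + (q n).eval (r:ℝ)) := by
          have : ∀ n, ∑ r ∈ Finset.Icc 1 p.2, e (c n * (r:ℝ) ^ 0 + (q n).eval (r:ℝ))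
              = (p.2 : ℂ) * e (((1:ℤ):ℝ) * c n) := by
            intro n
            rw [Finset.sum_congr rfl fun r _ => by rw [hpt n r]]
            rw [Finset.sum_const, Nat.card_Icc, nsmul_eq_mul]
            push_cast [Nat.add_sub_cancel]
            ring
          rw [Finset.sum_congr rfl fun n _ => this n, ← Finset.mul_sum, mul_inv]
          field_simp
  | succ d ih =>
    intro c q hq hud
    set a : ℕ → ℕ → ℂ := fun n r => e (c n * (r:ℝ) ^ (d+1) + (q n).eval (r:ℝ)) with haa
    have hanorm : ∀ n r, ‖a n r‖ = 1 := fun n r => e_norm _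
    set P : ℕ → Polynomial ℝ := fun n => C (c n) * X ^ (d+1) + q n with hP
    have haP : ∀ n (x : ℝ), (P n).eval x = c n * x ^ (d+1) + (q n).eval x := by
      intro n x; simp [hP]
    set cc : ℕ → ℕ → ℕ → ℝ := fun h h' n => ((d:ℝ) + 1) * ((h:ℝ) - (h':ℝ)) * c n with hcc
    set qq : ℕ → ℕ → ℕ → Polynomial ℝ := fun h h' n =>
      (P n).comp (X + C (h:ℝ)) - (P n).comp (X + C (h':ℝ)) - C (cc h h' n) * X ^ d with hqqdef
    have hqq : ∀ h h' n, (qq h h' n).degree < (d : WithBot ℕ) := by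
      intro h h' n
      exact degD d (c n) h h' (q n) (hq n)
    have hweyl : ∀ (h h' : ℕ), h ≠ h' → ∀ m : ℤ, m ≠ 0 →
        Tendsto (fun M : ℕ => (M:ℂ)⁻¹ * ∑ n ∈ Finset.Icc 1 M, e (↑m * cc h h' n))
          atTop (nhds 0) := by
      intro h h' hne m hm
      have hd1 : ((d:ℤ)+1) ≠ 0 := by positivity
      have hk : (m * ((d:ℤ)+1) * ((h:ℤ) - (h':ℤ))) ≠ 0 :=
        mul_ne_zero (mul_ne_zero hm hd1) (sub_ne_zero.mpr (by exact_mod_cast hne))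
      apply Tendsto.congr _ (hud _ hk)
      intro M
      congr 1
      apply Finset.sum_congr rfl
      intro n _
      congr 1
      simp only [hcc]
      push_cast
      ring
    have hIH : ∀ (h h' : ℕ), h ≠ h' →
        Tendsto (fun p : ℕ × ℕ => ((p.1:ℂ)*(p.2:ℂ))⁻¹ *
          ∑ n ∈ Finset.Icc 1 p.1, ∑ r ∈ Finset.Icc 1 p.2,
            e (cc h h' n * (r:ℝ)^d + (qq h h' n).eval (r:ℝ))) (atTop ×ˢ atTop) (nhds 0) :=
      fun h h' hne => ih (cc h h') (qq h h') (fun n => hqq h h' n) (hweyl h h' hne)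
    have hUid : ∀ (h h' n r : ℕ), a n (r + h) * (starRingEnd ℂ) (a n (r + h'))
        = e (cc h h' n * (r:ℝ)^d + (qq h h' n).eval (r:ℝ)) := by
      intro h h' n r
      simp only [haa]
      rw [e_mul_conj]
      congr 1
      have e1 : (qq h h' n).eval (r:ℝ)
          = (P n).eval ((r:ℝ) + h) - (P n).eval ((r:ℝ) + h') - cc h h' n * (r:ℝ)^d := by
        simp [hqqdef, Polynomial.eval_comp]
      have c1 : ((r + h : ℕ) : ℝ) = (r:ℝ) + (h:ℝ) := by push_cast; ring
      have c2 : ((r + h' : ℕ) : ℝ) = (r:ℝ) + (h':ℝ) := by push_cast; ring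
      rw [c1, c2, e1, ← haP n ((r:ℝ)+h), ← haP n ((r:ℝ)+h')]
      ring
    have htarget : (fun p : ℕ × ℕ => ((p.1:ℂ)*(p.2:ℂ))⁻¹ *
        ∑ n ∈ Finset.Icc 1 p.1, ∑ r ∈ Finset.Icc 1 p.2,
          e (c n * (r:ℝ)^(d+1) + (q n).eval (r:ℝ)))
        = fun p : ℕ × ℕ => ((p.1:ℂ)*(p.2:ℂ))⁻¹ * ∑ n ∈ Ioc 0 p.1, ∑ r ∈ Ioc 0 p.2, a n r := by
      funext p
      simp only [hIcc, haa]
    rw [htarget, NormedAddCommGroup.tendsto_nhds_zero]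
    intro ε hε
    set H : ℕ := ⌈(6:ℝ)/ε^2⌉₊ + 1 with hHdef
    have hH1 : 1 ≤ H := Nat.le_add_left 1 _
    have hHgt : (6:ℝ)/ε^2 < H := by
      calc (6:ℝ)/ε^2 ≤ ⌈(6:ℝ)/ε^2⌉₊ := Nat.le_ceil _
        _ < H := by exact_mod_cast Nat.lt_succ_self _
    have hHpos : (0:ℝ) < H := lt_of_le_of_lt (by positivity) hHgt
    have h2H : 2/(H:ℝ) < ε^2/3 := by
      rw [div_lt_div_iff₀ hHpos (by norm_num)]
      rw [div_lt_iff₀ (by positivity)] at hHgt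
      nlinarith
    set R0 : ℕ := ⌈(24:ℝ)*(H:ℝ)^2/ε^2⌉₊ + 1 with hR0def
    have hR0 : ∀ R : ℕ, R0 ≤ R → 8*(H:ℝ)^2/(R:ℝ)^2 < ε^2/3 := by
      intro R hR
      have h1 : (24:ℝ)*(H:ℝ)^2/ε^2 < R := by
        calc (24:ℝ)*(H:ℝ)^2/ε^2 ≤ ⌈(24:ℝ)*(H:ℝ)^2/ε^2⌉₊ := Nat.le_ceil _
          _ < R := by exact_mod_cast Nat.lt_of_lt_of_le (Nat.lt_succ_self _) hR
      have hRpos : (0:ℝ) < R := lt_of_le_of_lt (by positivity) h1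
      have hR1 : (1:ℝ) ≤ R := by
        have : (1:ℕ) ≤ R := by
          by_contra hcon
          push_neg at hcon
          interval_cases R
          · simp at hRpos
        exact_mod_cast this
      have h2 : (24:ℝ)*(H:ℝ)^2/ε^2 < (R:ℝ)^2 := h1.trans_le (by nlinarith)
      rw [div_lt_div_iff₀ (by positivity) (by norm_num)]
      rw [div_lt_iff₀ (by positivity)] at h2
      nlinarith
    have hev : ∀ᶠ p : ℕ×ℕ in atTop ×ˢ atTop, ∀ h ∈ range H, ∀ h' ∈ range H, h ≠ h' →
        ‖((p.1:ℂ)*(p.2:ℂ))⁻¹ * ∑ n ∈ Ioc 0 p.1, ∑ r ∈ Ioc 0 p.2,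
          a n (r+h) * (starRingEnd ℂ) (a n (r+h'))‖ ≤ ε^2/6 := by
      rw [eventually_all_finset]
      intro h hh
      rw [eventually_all_finset]
      intro h' hh'
      by_cases hne : h = h'
      · filter_upwards with p hcon
        exact absurd hne hcon
      · have hb := (NormedAddCommGroup.tendsto_nhds_zero.mp (hIH h h' hne)) (ε^2/6)
          (by positivity)
        filter_upwards [hb] with p hp _
        refine le_of_lt ?_
        have hsum : ∑ n ∈ Ioc 0 p.1, ∑ r ∈ Ioc 0 p.2,
            a n (r+h) * (starRingEnd ℂ) (a n (r+h'))
            = ∑ n ∈ Finset.Icc 1 p.1, ∑ r ∈ Finset.Icc 1 p.2,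
              e (cc h h' n * (r:ℝ)^d + (qq h h' n).eval (r:ℝ)) := by
          simp only [hIcc]
          exact Finset.sum_congr rfl fun n _ => Finset.sum_congr rfl fun r _ => hUid h h' n r
        rw [hsum]
        exact hp
    filter_upwards [hev, tendsto_fst.eventually (eventually_ge_atTop 1),
      tendsto_snd.eventually (eventually_ge_atTop (max 1 R0))] with p hpU hp1 hp2
    have hp2a : 1 ≤ p.2 := le_trans (le_max_left _ _) hp2
    have hp2b : R0 ≤ p.2 := le_trans (le_max_right _ _) hp2
    have master := vdc_master p.1 p.2 H hH1 hp1 hp2a a hanorm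
    have hmid : (∑ h ∈ range H, ∑ h' ∈ range H, if h = h' then (0:ℝ) else
        ‖((p.1:ℂ)*(p.2:ℂ))⁻¹ * ∑ n ∈ Ioc 0 p.1, ∑ r ∈ Ioc 0 p.2,
          a n (r+h) * (starRingEnd ℂ) (a n (r+h'))‖) ≤ (H:ℝ)^2 * (ε^2/6) := by
      calc (∑ h ∈ range H, ∑ h' ∈ range H, if h = h' then (0:ℝ) else
          ‖((p.1:ℂ)*(p.2:ℂ))⁻¹ * ∑ n ∈ Ioc 0 p.1, ∑ r ∈ Ioc 0 p.2,
            a n (r+h) * (starRingEnd ℂ) (a n (r+h'))‖)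
          ≤ ∑ h ∈ range H, ∑ h' ∈ range H, (ε^2/6) := by
            apply Finset.sum_le_sum
            intro h hh
            apply Finset.sum_le_sum
            intro h' hh'
            by_cases hne : h = h'
            · rw [if_pos hne]; positivity
            · rw [if_neg hne]; exact hpU h hh h' hh' hne
        _ = (H:ℝ)^2 * (ε^2/6) := by
            rw [Finset.sum_const, Finset.sum_const, card_range, nsmul_eq_mul, nsmul_eq_mul]
            push_cast
            ring
    have hmideq : (2/(H:ℝ)^2)*((H:ℝ)^2*(ε^2/6)) = ε^2/3 := by
      field_simp
      ring
    have hfin : ‖((p.1:ℂ)*(p.2:ℂ))⁻¹ * ∑ n ∈ Ioc 0 p.1, ∑ r ∈ Ioc 0 p.2, a n r‖^2 < ε^2 := by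
      refine lt_of_le_of_lt master ?_
      have h3 := hR0 p.2 hp2b
      have h4 : (2 / (H:ℝ) ^ 2) * (∑ h ∈ range H, ∑ h' ∈ range H,
          if h = h' then (0:ℝ) else
            ‖((p.1:ℂ)*(p.2:ℂ))⁻¹ * ∑ n ∈ Ioc 0 p.1, ∑ r ∈ Ioc 0 p.2,
              a n (r+h) * (starRingEnd ℂ) (a n (r+h'))‖) ≤ ε^2/3 := by
        calc (2 / (H:ℝ) ^ 2) * _ ≤ (2 / (H:ℝ) ^ 2) * ((H:ℝ)^2*(ε^2/6)) := by
              apply mul_le_mul_of_nonneg_left hmid (by positivity)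
          _ = ε^2/3 := hmideq
      linarith
    have hnn : 0 ≤ ‖((p.1:ℂ)*(p.2:ℂ))⁻¹ * ∑ n ∈ Ioc 0 p.1, ∑ r ∈ Ioc 0 p.2, a n r‖ :=
      norm_nonneg _
    nlinarith [hfin, hnn, hε]

/-- Lemma `lem:exp-sum`: if `(c_n)` is uniformly distributed mod 1 (Weyl criterion) and
`p_n(x) = c_n x^d + q_n(x)` with `deg q_n < d`, then the double exponential averages
`(1/(N_m R_m)) ∑_{n=1}^{N_m} ∑_{r=1}^{R_m} e(p_n(r))` tend to `0`. -/
theorem stmt8 (N R : ℕ → ℕ) (hN : Tendsto (fun m => N m) atTop atTop)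
    (hR : Tendsto (fun m => R m) atTop atTop) (d : ℕ)
    (c : ℕ → ℝ) (q : ℕ → Polynomial ℝ) (hq : ∀ n, (q n).degree < (d : WithBot ℕ))
    (hud : ∀ h : ℤ, h ≠ 0 →
      Tendsto (fun M : ℕ => (M : ℂ)⁻¹ * ∑ n ∈ Finset.Icc 1 M, e (h * c n))
        atTop (nhds 0)) :
    Tendsto (fun m : ℕ =>
        ((N m : ℂ) * (R m : ℂ))⁻¹ *
          ∑ n ∈ Finset.Icc 1 (N m), ∑ r ∈ Finset.Icc 1 (R m),
            e (c n * (r : ℝ) ^ d + (q n).eval (r : ℝ)))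
      atTop (nhds 0) := by
  have h1 := key d c q hq hud
  have h2 : Tendsto (fun m => ((N m, R m) : ℕ × ℕ)) atTop (atTop ×ˢ atTop) :=
    hN.prodMk hR
  have h3 := h1.comp h2
  exact h3
end

section
/- Let α ∈ (1,2) and r a positive integer. Then there exist infinitely many N ∈ ℕ such that 0 ≤ {α·N^{α−1}} − 1/(2r) < α(α−1)(N−1)^{α−2}, where {·} denotes the fractional part. -/
private lemma mvt_step (α : ℝ) (hα1 : 1 < α) (hα2 : α < 2) (x : ℝ) (hx : 1 ≤ x) :
    α * (x + 1) ^ (α - 1) - α * x ^ (α - 1) < α * (α - 1) * x ^ (α - 2) := by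
  have hx0 : (0:ℝ) < x := lt_of_lt_of_le one_pos hx
  have hderiv : ∀ y : ℝ, 0 < y →
      HasDerivAt (fun y : ℝ => α * y ^ (α - 1)) (α * ((α - 1) * y ^ (α - 2))) y := by
    intro y hy
    have := (Real.hasDerivAt_rpow_const (p := α - 1) (Or.inl hy.ne')).const_mul α
    simpa [show α - 1 - 1 = α - 2 by ring] using this
  obtain ⟨c, hc, hceq⟩ := exists_hasDerivAt_eq_slope (fun y : ℝ => α * y ^ (α - 1))
    (fun y => α * ((α - 1) * y ^ (α - 2))) (by linarith : x < x + 1)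
    (fun y hy => (hderiv y (by simp at hy; linarith [hy.1])).continuousAt.continuousWithinAt)
    (fun y hy => hderiv y (by linarith [hy.1]))
  have hcx : x < c := hc.1
  have hc0 : 0 < c := lt_trans hx0 hcx
  have hlt : c ^ (α - 2) < x ^ (α - 2) :=
    Real.rpow_lt_rpow_of_neg hx0 hcx (by linarith)
  have hαpos : 0 < α * (α - 1) := by nlinarith
  calc α * (x + 1) ^ (α - 1) - α * x ^ (α - 1)
      = α * ((α - 1) * c ^ (α - 2)) := by
        rw [hceq]; field_simp; ring
    _ = α * (α - 1) * c ^ (α - 2) := by ring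
    _ < α * (α - 1) * x ^ (α - 2) := by
        exact mul_lt_mul_of_pos_left hlt hαpos

/-- Lemma `lem:lb1`: for `1 < α < 2` and `r ≥ 1`, there are infinitely many `N` with
`0 ≤ {α N^{α-1}} - 1/(2r) < α(α-1)(N-1)^{α-2}`. -/
theorem stmt14 (α : ℝ) (hα1 : 1 < α) (hα2 : α < 2) (r : ℕ) (hr : 1 ≤ r) :
    ∀ M : ℕ, ∃ N : ℕ, M ≤ N ∧
      0 ≤ Int.fract (α * (N : ℝ) ^ (α - 1)) - 1 / (2 * r) ∧
      Int.fract (α * (N : ℝ) ^ (α - 1)) - 1 / (2 * r) < α * (α - 1) * ((N : ℝ) - 1) ^ (α - 2) := by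
  intro M
  set t : ℝ := 1 / (2 * r) with ht
  have hr1 : (1:ℝ) ≤ r := by exact_mod_cast hr
  have ht0 : 0 < t := by positivity
  have ht2 : t ≤ 1 / 2 := by
    rw [ht, div_le_div_iff₀ (by positivity) (by norm_num)]
    linarith
  have hα0 : (0:ℝ) < α := by linarith
  have hαα : 0 < α * (α - 1) := by nlinarith
  -- step bound tends to 0
  have hstep0 : Filter.Tendsto (fun n : ℕ => α * (α - 1) * (n:ℝ) ^ (α - 2))
      Filter.atTop (nhds 0) := by
    have h1 : Filter.Tendsto (fun y : ℝ => y ^ (-(2 - α))) Filter.atTop (nhds 0) :=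
      tendsto_rpow_neg_atTop (by linarith)
    have h2 := (h1.comp (tendsto_natCast_atTop_atTop (R := ℝ))).const_mul (α * (α - 1))
    simpa [Function.comp, show -(2 - α) = α - 2 by ring] using h2
  have hev : ∀ᶠ n : ℕ in Filter.atTop, α * (α - 1) * (n:ℝ) ^ (α - 2) < 1 / 2 := by
    have := hstep0.eventually_lt_const (show (0:ℝ) < 1/2 by norm_num)
    simpa using this
  obtain ⟨N0, hN0M, hN01, hN0s⟩ : ∃ N0 : ℕ, M ≤ N0 ∧ 1 ≤ N0 ∧
      α * (α - 1) * (N0:ℝ) ^ (α - 2) < 1 / 2 := by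
    obtain ⟨N0, hN0⟩ := ((Filter.eventually_ge_atTop M).and
      ((Filter.eventually_ge_atTop 1).and hev)).exists
    exact ⟨N0, hN0.1, hN0.2.1, hN0.2.2⟩
  -- g tends to atTop
  set g : ℕ → ℝ := fun n => α * (n:ℝ) ^ (α - 1) with hg
  have hgtop : Filter.Tendsto g Filter.atTop Filter.atTop := by
    have h1 : Filter.Tendsto (fun y : ℝ => y ^ (α - 1)) Filter.atTop Filter.atTop :=
      tendsto_rpow_atTop (by linarith)
    exact (h1.comp tendsto_natCast_atTop_atTop).const_mul_atTop hα0
  set k : ℤ := ⌈g N0⌉ with hk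
  set c : ℝ := (k:ℝ) + t with hc
  have hgN0c : g N0 < c := by
    have := Int.le_ceil (g N0)
    simp only [hc]
    linarith
  have hPex : ∃ n : ℕ, N0 + 1 ≤ n ∧ c ≤ g n := by
    exact ((Filter.eventually_ge_atTop (N0 + 1)).and (hgtop.eventually_ge_atTop c)).exists
  classical
  set N : ℕ := Nat.find hPex with hN
  obtain ⟨hNge, hNc⟩ := Nat.find_spec hPex
  have hN1 : 1 ≤ N := le_trans (by omega) hNge
  -- previous value below c
  have hprev : g (N - 1) < c := by
    by_contra h
    push_neg at h
    rcases eq_or_lt_of_le hNge with heq | hlt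
    · have : N - 1 = N0 := by omega
      rw [this] at h
      exact absurd h (not_le.mpr hgN0c)
    · exact Nat.find_min hPex (show N - 1 < N by omega) ⟨by omega, h⟩
  have hN1N0 : N0 ≤ N - 1 := by omega
  have hN1cast : ((N - 1 : ℕ) : ℝ) = (N:ℝ) - 1 := by
    have : N - 1 + 1 = N := by omega
    push_cast [Nat.cast_sub hN1]
    ring
  have hN1ge1 : (1:ℝ) ≤ ((N - 1 : ℕ) : ℝ) := by
    have : (1:ℕ) ≤ N - 1 := by omega
    exact_mod_cast this
  -- step bound at N-1
  have hstepN : g N - g (N - 1) < α * (α - 1) * ((N:ℝ) - 1) ^ (α - 2) := by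
    have h := mvt_step α hα1 hα2 ((N - 1 : ℕ) : ℝ) hN1ge1
    have hcast : ((N - 1 : ℕ) : ℝ) + 1 = (N : ℝ) := by rw [hN1cast]; ring
    rw [hN1cast] at h
    rw [hN1cast] at hcast
    rw [hcast] at h
    simp only [hg]
    rw [hN1cast]
    exact h
  have hstepsmall : α * (α - 1) * ((N:ℝ) - 1) ^ (α - 2) ≤ 1 / 2 := by
    have hmono : ((N:ℝ) - 1) ^ (α - 2) ≤ (N0:ℝ) ^ (α - 2) := by
      apply Real.rpow_le_rpow_of_nonpos
      · exact_mod_cast Nat.lt_of_lt_of_le Nat.zero_lt_one hN01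
      · rw [← hN1cast]; exact_mod_cast hN1N0
      · linarith
    calc α * (α - 1) * ((N:ℝ) - 1) ^ (α - 2)
        ≤ α * (α - 1) * (N0:ℝ) ^ (α - 2) := mul_le_mul_of_nonneg_left hmono hαα.le
      _ ≤ 1 / 2 := hN0s.le
  -- floor of g N is k
  have hgNlt : g N < (k:ℝ) + 1 := by
    have : g N - g (N - 1) < 1 / 2 := lt_of_lt_of_le hstepN hstepsmall
    have := hprev
    simp only [hc] at this
    linarith
  have hgNge : (k:ℝ) ≤ g N := by
    have : c ≤ g N := hNc
    simp only [hc] at this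
    linarith
  have hfloor : ⌊g N⌋ = k := by
    rw [Int.floor_eq_iff]
    constructor <;> [exact hgNge; exact hgNlt]
  have hfract : Int.fract (g N) = g N - (k:ℝ) := by
    rw [Int.fract, hfloor]
  refine ⟨N, by omega, ?_, ?_⟩
  · show 0 ≤ Int.fract (g N) - t
    rw [hfract]
    have : c ≤ g N := hNc
    simp only [hc] at this
    linarith
  · show Int.fract (g N) - t < α * (α - 1) * ((N:ℝ) - 1) ^ (α - 2)
    rw [hfract]
    have h1 : g (N - 1) < c := hprev
    simp only [hc] at h1
    linarith
end

section
/- Let α ∈ (d, d+1) with d ≥ 1 an integer, f(x) = x^α, m₀ ≥ 1 and k ≥ d+2 an integer. Then the function g(x) := Δ_x^d f(m₀ + (k−d−1)x) − Δ_x^d f(m₀) is strictly increasing on (0,∞); here Δ_x denotes the difference operator with step x, i.e. Δ_x^d h(y) = ∑_{i=0}^{d} C(d,i)·(−1)^i·h(y + (d−i)x). -/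
open Finset Function

/-- iterated forward difference as a binomial sum with top-down indexing. -/
lemma fwdDiff_iter_sum (f : ℝ → ℝ) (x : ℝ) (n : ℕ) (y : ℝ) :
    (fwdDiff x)^[n] f y
      = ∑ i ∈ Finset.range (n + 1), (n.choose i : ℝ) * (-1) ^ i * f (y + ((n : ℝ) - i) * x) := by
  rw [fwdDiff_iter_eq_sum_shift, ← Finset.sum_range_reflect _ (n + 1)]
  refine Finset.sum_congr rfl ?_
  intro i hi
  rw [Finset.mem_range] at hi
  have hin : i ≤ n := Nat.lt_succ_iff.mp hi
  have h0 : n + 1 - 1 - i = n - i := by omega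
  have h1 : n - (n - i) = i := by omega
  have h2 : ((n - i : ℕ) : ℝ) = (n : ℝ) - i := by
    push_cast [Nat.cast_sub hin]; ring
  rw [h0, h1, Nat.choose_symm hin, zsmul_eq_mul, nsmul_eq_mul]
  push_cast [h2]
  ring

open Finset Function

lemma hasDerivAt_fwdDiff_iter (x : ℝ) (hx : 0 ≤ x) (a : ℝ) (n : ℕ) :
    ∀ (f f' : ℝ → ℝ), (∀ t, a < t → HasDerivAt f (f' t) t) →
      ∀ y, a < y → HasDerivAt ((fwdDiff x)^[n] f) ((fwdDiff x)^[n] f' y) y := by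
  induction n with
  | zero => intro f f' hf y hy; simpa using hf y hy
  | succ n ih =>
    intro f f' hf y hy
    rw [Function.iterate_succ_apply]
    have : (fwdDiff x)^[n + 1] f' y = (fwdDiff x)^[n] (fwdDiff x f') y := by
      rw [Function.iterate_succ_apply]
    rw [this]
    refine ih (fwdDiff x f) (fwdDiff x f') ?_ y hy
    intro t ht
    have h1 : HasDerivAt (fun s => f (s + x)) (f' (t + x)) t := by
      have := (hf (t + x) (by linarith)).comp t ((hasDerivAt_id t).add_const x)
      simpa [Function.comp_def] using this
    exact h1.sub (hf t ht)

lemma fwdDiff_iter_pos (x : ℝ) (hx : 0 < x) (a : ℝ) :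
    ∀ (n : ℕ) (h : ℕ → ℝ → ℝ),
      (∀ m, m < n → ∀ t, a < t → HasDerivAt (h m) (h (m + 1) t) t) →
      (∀ t, a < t → 0 < h n t) →
      ∀ y, a < y → 0 < (fwdDiff x)^[n] (h 0) y := by
  intro n
  induction n with
  | zero => intro h _ hpos y hy; simpa using hpos y hy
  | succ n ih =>
    intro h hderiv hpos y hy
    have key : ∀ t, a < t →
        HasDerivAt ((fwdDiff x)^[n] (h 0)) ((fwdDiff x)^[n] (h 1) t) t := by
      intro t ht
      exact hasDerivAt_fwdDiff_iter x hx.le a n (h 0) (h 1)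
        (fun s hs => hderiv 0 (Nat.succ_pos n) s hs) t ht
    have pos1 : ∀ t, a < t → 0 < (fwdDiff x)^[n] (h 1) t := by
      refine ih (fun m => h (m + 1)) ?_ ?_
      · intro m hm t ht; exact hderiv (m + 1) (by omega) t ht
      · intro t ht; exact hpos t ht
    have mono : StrictMonoOn ((fwdDiff x)^[n] (h 0)) (Set.Ioi a) := by
      refine strictMonoOn_of_deriv_pos (convex_Ioi a) ?_ ?_
      · intro t ht
        exact (key t ht).differentiableAt.continuousAt.continuousWithinAt
      · intro t ht
        rw [interior_Ioi] at ht
        rw [(key t ht).deriv]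
        exact pos1 t ht
    rw [Function.iterate_succ_apply']
    have hlt := mono (Set.mem_Ioi.mpr hy) (Set.mem_Ioi.mpr (by linarith : a < y + x))
      (by linarith : y < y + x)
    simpa [fwdDiff] using sub_pos.mpr hlt

open Finset Function

/-- Coefficient recursion: `(A_m, B_m)` such that the m-th derivative of
`c ↦ c * (m₀ + c*x)^β` is `c ↦ (A_m + B_m c) * (m₀ + c*x)^(β - m)`. -/
noncomputable def fam (β m₀ x : ℝ) : ℕ → ℝ × ℝ
  | 0 => (0, 1)
  | (m + 1) =>
      ((fam β m₀ x m).2 * m₀ + (β - (m : ℝ)) * x * (fam β m₀ x m).1,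
       (fam β m₀ x m).2 * x * (1 + (β - (m : ℝ))))

lemma famB_pos (β m₀ x : ℝ) (hx : 0 < x) (d : ℕ) (hβ : (d : ℝ) - 1 < β) :
    ∀ m, m ≤ d + 1 → 0 < (fam β m₀ x m).2 := by
  intro m
  induction m with
  | zero => intro _; simp [fam]
  | succ m ih =>
    intro hm
    have hm' : (m : ℝ) ≤ (d : ℝ) := by exact_mod_cast Nat.lt_succ_iff.mp (by omega)
    have h1 : 0 < 1 + (β - (m : ℝ)) := by linarith
    have := ih (by omega)
    show 0 < (fam β m₀ x m).2 * x * (1 + (β - (m : ℝ)))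
    positivity

lemma famInv (β m₀ x : ℝ) :
    ∀ m : ℕ, x * (fam β m₀ x m).1 * (β + 1) = (m : ℝ) * m₀ * (fam β m₀ x m).2 := by
  intro m
  induction m with
  | zero => simp [fam]
  | succ m ih =>
    show x * ((fam β m₀ x m).2 * m₀ + (β - (m : ℝ)) * x * (fam β m₀ x m).1) * (β + 1)
        = ((m : ℕ) + 1 : ℕ) * m₀ * ((fam β m₀ x m).2 * x * (1 + (β - (m : ℝ))))
    push_cast
    linear_combination (β - (m : ℝ)) * x * ih

/-- Derivative of `(A + B c)(m₀ + c x)^γ`. -/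
lemma hasDerivAt_AB (A B γ m₀ x c : ℝ) (hpos : 0 < m₀ + c * x) :
    HasDerivAt (fun c => (A + B * c) * (m₀ + c * x) ^ γ)
      ((B * m₀ + γ * x * A + B * x * (1 + γ) * c) * (m₀ + c * x) ^ (γ - 1)) c := by
  have hlin : HasDerivAt (fun c : ℝ => m₀ + c * x) x c := by
    simpa using ((hasDerivAt_id c).mul_const x).const_add m₀
  have hpow : HasDerivAt (fun c : ℝ => (m₀ + c * x) ^ γ)
      (x * γ * (m₀ + c * x) ^ (γ - 1)) c :=
    hlin.rpow_const (Or.inl hpos.ne')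
  have hAB : HasDerivAt (fun c : ℝ => A + B * c) B c := by
    simpa using ((hasDerivAt_id c).const_mul B).const_add A
  have := hAB.mul hpow
  refine this.congr_deriv ?_
  have hg : (m₀ + c * x) ^ γ = (m₀ + c * x) ^ (γ - 1) * (m₀ + c * x) := by
    rw [← Real.rpow_add_one hpos.ne' (γ - 1)]; ring_nf
  rw [hg]; ring
/-- For `f(x) = x^α` with `d < α < d+1`, `m₀ ≥ 1` and `k ≥ d+2`, the function
`g(x) = Δ_x^d f(m₀ + (k-d-1)x) − Δ_x^d f(m₀)`, where
`Δ_x^d h(y) = ∑_{i=0}^d C(d,i)(−1)^i h(y+(d−i)x)`, is strictly increasing on `(0,∞)`. -/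
theorem stmt18 (d : ℕ) (hd : 1 ≤ d) (α : ℝ) (hα1 : (d : ℝ) < α) (hα2 : α < d + 1)
    (m₀ : ℝ) (hm : 1 ≤ m₀) (k : ℕ) (hk : d + 2 ≤ k) :
    StrictMonoOn (fun x : ℝ =>
        (∑ i ∈ Finset.range (d + 1),
            (d.choose i : ℝ) * (-1) ^ i * (m₀ + ((k : ℝ) - d - 1) * x + ((d : ℝ) - i) * x) ^ α)
          - ∑ i ∈ Finset.range (d + 1),
              (d.choose i : ℝ) * (-1) ^ i * (m₀ + ((d : ℝ) - i) * x) ^ α)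
      (Set.Ioi 0) := by
  have hd1 : (1 : ℝ) ≤ (d : ℝ) := by exact_mod_cast hd
  have hα0 : 0 < α := lt_of_le_of_lt (by positivity) hα1
  have hk1 : (d : ℝ) + 2 ≤ (k : ℝ) := by exact_mod_cast hk
  have hm0 : 0 < m₀ := lt_of_lt_of_le one_pos hm
  have hg : ∀ x : ℝ, 0 < x → HasDerivAt (fun x : ℝ =>
        (∑ i ∈ Finset.range (d + 1),
            (d.choose i : ℝ) * (-1) ^ i * (m₀ + ((k : ℝ) - d - 1) * x + ((d : ℝ) - i) * x) ^ α)
          - ∑ i ∈ Finset.range (d + 1),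
              (d.choose i : ℝ) * (-1) ^ i * (m₀ + ((d : ℝ) - i) * x) ^ α)
      ((∑ i ∈ Finset.range (d + 1), (d.choose i : ℝ) * (-1) ^ i *
          (((((k : ℝ) - d - 1) + ((d : ℝ) - i))) * α *
            (m₀ + ((k : ℝ) - d - 1) * x + ((d : ℝ) - i) * x) ^ (α - 1)))
        - ∑ i ∈ Finset.range (d + 1), (d.choose i : ℝ) * (-1) ^ i *
            (((d : ℝ) - i) * α * (m₀ + ((d : ℝ) - i) * x) ^ (α - 1))) x := by
    intro x hx
    have h1 : HasDerivAt (fun x : ℝ => ∑ i ∈ Finset.range (d + 1),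
        (d.choose i : ℝ) * (-1) ^ i * (m₀ + ((k : ℝ) - d - 1) * x + ((d : ℝ) - i) * x) ^ α)
        (∑ i ∈ Finset.range (d + 1), (d.choose i : ℝ) * (-1) ^ i *
          (((((k : ℝ) - d - 1) + ((d : ℝ) - i))) * α *
            (m₀ + ((k : ℝ) - d - 1) * x + ((d : ℝ) - i) * x) ^ (α - 1))) x := by
      refine HasDerivAt.fun_sum ?_
      intro i hi
      have hi' : (i : ℝ) ≤ (d : ℝ) := by
        exact_mod_cast Nat.lt_succ_iff.mp (Finset.mem_range.mp hi)
      have hb : 0 < m₀ + ((k : ℝ) - d - 1) * x + ((d : ℝ) - i) * x := by nlinarith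
      have hlin : HasDerivAt (fun x : ℝ => m₀ + ((k : ℝ) - d - 1) * x + ((d : ℝ) - i) * x)
          ((((k : ℝ) - d - 1) + ((d : ℝ) - i))) x := by
        simpa using ((((hasDerivAt_id x).const_mul ((k : ℝ) - d - 1)).const_add m₀).fun_add
          ((hasDerivAt_id x).const_mul ((d : ℝ) - i)))
      exact (hlin.rpow_const (Or.inl hb.ne')).const_mul _
    have h2 : HasDerivAt (fun x : ℝ => ∑ i ∈ Finset.range (d + 1),
        (d.choose i : ℝ) * (-1) ^ i * (m₀ + ((d : ℝ) - i) * x) ^ α)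
        (∑ i ∈ Finset.range (d + 1), (d.choose i : ℝ) * (-1) ^ i *
          (((d : ℝ) - i) * α * (m₀ + ((d : ℝ) - i) * x) ^ (α - 1))) x := by
      refine HasDerivAt.fun_sum ?_
      intro i hi
      have hi' : (i : ℝ) ≤ (d : ℝ) := by
        exact_mod_cast Nat.lt_succ_iff.mp (Finset.mem_range.mp hi)
      have hb : 0 < m₀ + ((d : ℝ) - i) * x := by nlinarith
      have hlin : HasDerivAt (fun x : ℝ => m₀ + ((d : ℝ) - i) * x) ((d : ℝ) - i) x := by
        simpa using (((hasDerivAt_id x).const_mul ((d : ℝ) - i)).const_add m₀)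
      exact (hlin.rpow_const (Or.inl hb.ne')).const_mul _
    exact h1.sub h2
  apply strictMonoOn_of_deriv_pos (convex_Ioi 0)
  · intro x hx
    exact (hg x hx).differentiableAt.continuousAt.continuousWithinAt
  · intro x hx
    rw [interior_Ioi] at hx
    have hx0 : 0 < x := hx
    rw [(hg x hx0).deriv]
    set β : ℝ := α - 1 with hβ
    have hβ1 : (d : ℝ) - 1 < β := by rw [hβ]; linarith
    have hβ2 : β < (d : ℝ) := by rw [hβ]; linarith
    have hβα : β + 1 = α := by rw [hβ]; ring
    set B : ℝ → ℝ := fun c => c * (m₀ + c * x) ^ β with hBdef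
    have hrw : (∑ i ∈ Finset.range (d + 1), (d.choose i : ℝ) * (-1) ^ i *
          (((((k : ℝ) - d - 1) + ((d : ℝ) - i))) * α *
            (m₀ + ((k : ℝ) - d - 1) * x + ((d : ℝ) - i) * x) ^ (α - 1)))
        - (∑ i ∈ Finset.range (d + 1), (d.choose i : ℝ) * (-1) ^ i *
            (((d : ℝ) - i) * α * (m₀ + ((d : ℝ) - i) * x) ^ (α - 1)))
        = α * ((fwdDiff (1:ℝ))^[d] B ((k : ℝ) - d - 1) - (fwdDiff (1:ℝ))^[d] B 0) := by
      rw [fwdDiff_iter_sum, fwdDiff_iter_sum, mul_sub, Finset.mul_sum, Finset.mul_sum, hBdef]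
      congr 1
      · refine Finset.sum_congr rfl ?_
        intro i hi
        have e : m₀ + ((k : ℝ) - d - 1) * x + ((d : ℝ) - i) * x
            = m₀ + ((k : ℝ) - ↑d - 1 + ((d : ℝ) - ↑i) * 1) * x := by ring
        rw [e, hβ]
        ring
      · refine Finset.sum_congr rfl ?_
        intro i hi
        have e : m₀ + ((d : ℝ) - i) * x = m₀ + (0 + ((d : ℝ) - ↑i) * 1) * x := by ring
        rw [e, hβ]
        ring
    rw [hrw]
    have hcast : ((k - d - 1 : ℕ) : ℝ) = (k : ℝ) - d - 1 := by
      rw [Nat.sub_sub, Nat.cast_sub (by omega : d + 1 ≤ k)]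
      push_cast; ring
    have htel : (fwdDiff (1:ℝ))^[d] B ((k : ℝ) - d - 1) - (fwdDiff (1:ℝ))^[d] B 0
        = ∑ j ∈ Finset.range (k - d - 1), (fwdDiff (1:ℝ))^[d + 1] B (j : ℝ) := by
      have h0 := Finset.sum_range_sub (fun j : ℕ => (fwdDiff (1:ℝ))^[d] B (j : ℝ)) (k - d - 1)
      simp only [Nat.cast_zero] at h0
      rw [← hcast, ← h0]
      refine Finset.sum_congr rfl ?_
      intro j hj
      rw [Function.iterate_succ_apply']
      simp only [fwdDiff]
      push_cast
      ring
    have hterm : ∀ j : ℕ, 0 < (fwdDiff (1:ℝ))^[d + 1] B (j : ℝ) := by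
      intro j
      set H : ℕ → ℝ → ℝ := fun m c =>
        ((fam β m₀ x m).1 + (fam β m₀ x m).2 * c) * (m₀ + c * x) ^ (β - (m : ℝ)) with hH
      have hH0 : H 0 = B := by
        funext c
        rw [hH, hBdef]
        norm_num [fam]
      have hbase : ∀ t : ℝ, -(m₀ / x) < t → 0 < m₀ + t * x := by
        intro t ht
        have h1 : -(m₀ / x) * x < t * x := mul_lt_mul_of_pos_right ht hx0
        rw [neg_mul, div_mul_cancel₀ _ hx0.ne'] at h1
        linarith
      have hder : ∀ m, m < d + 1 → ∀ t, -(m₀ / x) < t → HasDerivAt (H m) (H (m + 1) t) t := by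
        intro m hm t ht
        have hp := hbase t ht
        have hder0 := hasDerivAt_AB (fam β m₀ x m).1 (fam β m₀ x m).2 (β - (m : ℝ)) m₀ x t hp
        have e : β - ((m + 1 : ℕ) : ℝ) = β - (m : ℝ) - 1 := by push_cast; ring
        rw [hH]
        show HasDerivAt (fun c => ((fam β m₀ x m).1 + (fam β m₀ x m).2 * c)
            * (m₀ + c * x) ^ (β - (m : ℝ)))
          (((fam β m₀ x (m+1)).1 + (fam β m₀ x (m+1)).2 * t)
            * (m₀ + t * x) ^ (β - ((m+1 : ℕ) : ℝ))) t
        rw [e]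
        convert hder0 using 2
        rfl
      have htop : ∀ t, -(m₀ / x) < t → 0 < H (d + 1) t := by
        intro t ht
        have hB' : 0 < (fam β m₀ x (d + 1)).2 := famB_pos β m₀ x hx0 d hβ1 (d + 1) le_rfl
        have hInv := famInv β m₀ x (d + 1)
        rw [hβα] at hInv
        have hcd : ((d + 1 : ℕ) : ℝ) = (d : ℝ) + 1 := by push_cast; ring
        rw [hcd] at hInv
        have hAx : m₀ * (fam β m₀ x (d + 1)).2 < x * (fam β m₀ x (d + 1)).1 := by
          nlinarith [mul_pos hm0 hB', hα0]
        have h1 : -(m₀ / x) * x < t * x := mul_lt_mul_of_pos_right ht hx0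
        rw [neg_mul, div_mul_cancel₀ _ hx0.ne'] at h1
        have h2 : 0 < ((fam β m₀ x (d + 1)).1 + (fam β m₀ x (d + 1)).2 * t) * x := by
          nlinarith [mul_lt_mul_of_pos_left h1 hB']
        have h3 : 0 < (fam β m₀ x (d + 1)).1 + (fam β m₀ x (d + 1)).2 * t := by
          rcases mul_pos_iff.mp h2 with ⟨h, _⟩ | ⟨_, h⟩
          · exact h
          · linarith
        rw [hH]
        exact mul_pos h3 (Real.rpow_pos_of_pos (hbase t ht) _)
      have hja : -(m₀ / x) < (j : ℝ) := by
        have h4 : 0 < m₀ / x := div_pos hm0 hx0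
        have h5 : -(m₀ / x) < 0 := by linarith
        exact lt_of_lt_of_le h5 (Nat.cast_nonneg j)
      have := fwdDiff_iter_pos 1 one_pos (-(m₀ / x)) (d + 1) H hder htop (j : ℝ) hja
      rwa [hH0] at this
    rw [htel]
    refine mul_pos hα0 (Finset.sum_pos (fun j _ => hterm j) ?_)
    rw [Finset.nonempty_range_iff]
    omega
end
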